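/- arXiv:2604.23967 — 6 statements merged into one kernel-verified Lean document; each statement's English description precedes it below -/
import Mathlib

section
/- An algebra A over a finite signature Σ is almost free (i.e., isomorphic to F_Γ for some finite set Γ of ground term equations) if and only if A is free over some finite partial Σ-algebra B. -/
namespace AFA

open Classical

/-- A functional signature: operation symbols with arities. Constants are arity-0 symbols. -/
structure Sig where
  Op : Type
  arity : Op → ℕ

/-- Ground terms over a signature. -/
inductive Tm (S : Sig) : Type
  | node (f : S.Op) (args : Fin (S.arity f) → Tm S) : Tm S

/-- The ground term given by a constant symbol. -/
def constTm (S : Sig) (c : S.Op) (h : S.arity c = 0) : Tm S :=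
  Tm.node c (fun i => absurd i.isLt (by omega))

/-- Height of a ground term (constants have height 0). -/
def Tm.height {S : Sig} : Tm S → ℕ
  | Tm.node _ a => Finset.univ.sup fun i => (a i).height + 1

/-- The i-th immediate subterm (child of the root of the syntax tree), if it exists. -/
def Tm.child {S : Sig} : Tm S → ℕ → Option (Tm S)
  | Tm.node f a, i => if h : i < S.arity f then some (a ⟨i, h⟩) else none

/-- A total algebra over the signature `S`. -/
structure Alg (S : Sig) where
  carrier : Type
  op : (f : S.Op) → (Fin (S.arity f) → carrier) → carrier

/-- Homomorphism of total algebras. -/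
structure Hom {S : Sig} (A B : Alg S) where
  toFun : A.carrier → B.carrier
  map : ∀ (f : S.Op) (a : Fin (S.arity f) → A.carrier),
    toFun (A.op f a) = B.op f (fun i => toFun (a i))

/-- Evaluation of a ground term in an algebra. -/
def Tm.eval {S : Sig} (A : Alg S) : Tm S → A.carrier
  | Tm.node f a => A.op f (fun i => (a i).eval A)

/-- An algebra is generated by the constants iff every element is the value of a ground term. -/
def GeneratedAlg {S : Sig} (A : Alg S) : Prop :=
  ∀ x : A.carrier, ∃ t : Tm S, t.eval A = x

/-- Isomorphism of total algebras. -/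
def AlgIso {S : Sig} (A B : Alg S) : Prop :=
  ∃ h : Hom A B, Function.Bijective h.toFun

/-- Derivability in equational logic from a set `Γ` of ground equations:
the smallest congruence containing `Γ`. `Thm Γ p q` means `Γ ⊢ p = q`. -/
inductive Thm {S : Sig} (Γ : Set (Tm S × Tm S)) : Tm S → Tm S → Prop
  | ax {p q : Tm S} : (p, q) ∈ Γ → Thm Γ p q
  | refl (t : Tm S) : Thm Γ t t
  | symm {p q : Tm S} : Thm Γ p q → Thm Γ q p
  | trans {p q r : Tm S} : Thm Γ p q → Thm Γ q r → Thm Γ p r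
  | congr {f : S.Op} {a b : Fin (S.arity f) → Tm S} :
      (∀ i, Thm Γ (a i) (b i)) → Thm Γ (Tm.node f a) (Tm.node f b)

/-- The setoid `∼_Γ` on ground terms. -/
def thmSetoid {S : Sig} (Γ : Set (Tm S × Tm S)) : Setoid (Tm S) :=
  ⟨Thm Γ, ⟨fun t => Thm.refl t, fun h => Thm.symm h, fun h₁ h₂ => Thm.trans h₁ h₂⟩⟩

/-- The quotient algebra `F_Γ = F/∼_Γ`. -/
noncomputable def FGamma {S : Sig} (Γ : Set (Tm S × Tm S)) : Alg S where
  carrier := Quotient (thmSetoid Γ)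
  op f a := Quotient.mk (thmSetoid Γ) (Tm.node f (fun i => (a i).out))

/-- Single-step ground rewriting: replace a subterm which is one side of an
equation of `Γ` by the other side. -/
inductive Step {S : Sig} (Γ : Set (Tm S × Tm S)) : Tm S → Tm S → Prop
  | here {p q : Tm S} : (p, q) ∈ Γ ∨ (q, p) ∈ Γ → Step Γ p q
  | sub {f : S.Op} {a b : Fin (S.arity f) → Tm S} (i : Fin (S.arity f)) :
      Step Γ (a i) (b i) → (∀ j, j ≠ i → a j = b j) → Step Γ (Tm.node f a) (Tm.node f b)

/-- Subterm relation on ground terms. -/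
inductive Subterm {S : Sig} : Tm S → Tm S → Prop
  | refl (t : Tm S) : Subterm t t
  | step {s : Tm S} {f : S.Op} {a : Fin (S.arity f) → Tm S} (i : Fin (S.arity f)) :
      Subterm s (a i) → Subterm s (Tm.node f a)

/-- `p` occurs in `Γ` (is one side of an equation of `Γ`). -/
def SideOf {S : Sig} (Γ : Set (Tm S × Tm S)) (p : Tm S) : Prop :=
  ∃ e ∈ Γ, p = e.1 ∨ p = e.2

/-- `ST Γ`: all subterms of terms occurring in `Γ`. -/
def ST {S : Sig} (Γ : Set (Tm S × Tm S)) : Set (Tm S) :=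
  {t | ∃ e ∈ Γ, Subterm t e.1 ∨ Subterm t e.2}

/-- A term "has a type" if it is `∼_Γ`-equivalent to a term mentioned in `Γ`. -/
def HasType {S : Sig} (Γ : Set (Tm S × Tm S)) (t : Tm S) : Prop :=
  ∃ p, SideOf Γ p ∧ Thm Γ t p

/-- `w` is an immediate subterm of `u`. -/
def ImmSub {S : Sig} (w u : Tm S) : Prop :=
  ∃ (f : S.Op) (a : Fin (S.arity f) → Tm S) (i : Fin (S.arity f)), u = Tm.node f a ∧ a i = w

/-- Edge relation of the quotient graph `R̂_Γ`: there is a directed edge from the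
class of `u` to the class of `w` iff some `Γ`-subterm-occurrence `u'` equivalent to `u`
has an immediate subterm `w'` equivalent to `w`. -/
def EdgeHat {S : Sig} (Γ : Set (Tm S × Tm S)) (u w : Tm S) : Prop :=
  ∃ u' w', u' ∈ ST Γ ∧ w' ∈ ST Γ ∧ Thm Γ u u' ∧ Thm Γ w w' ∧ ImmSub w' u'

/-- A directed cycle of `R̂_Γ` is reachable from (the class of) `t` by a directed path. -/
def CyclicFrom {S : Sig} (Γ : Set (Tm S × Tm S)) (t : Tm S) : Prop :=
  ∃ u, Relation.ReflTransGen (EdgeHat Γ) t u ∧ Relation.TransGen (EdgeHat Γ) u u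

/-- `t` is of cyclic type: `t` is `∼_Γ`-equivalent to a term mentioned in `Γ`
whose type is cyclic. -/
def OfCyclicType {S : Sig} (Γ : Set (Tm S × Tm S)) (t : Tm S) : Prop :=
  ∃ p, SideOf Γ p ∧ Thm Γ t p ∧ CyclicFrom Γ p

/-- The canonical representative map: given a choice function `r` assigning to each
typed term the fixed representative of its type, replace each maximal typed subterm
of `t` by the chosen representative. -/
noncomputable def repMap {S : Sig} (Γ : Set (Tm S × Tm S)) (r : Tm S → Tm S) : Tm S → Tm S
  | Tm.node f a =>
      if HasType Γ (Tm.node f a) then r (Tm.node f a)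
      else Tm.node f fun i => repMap Γ r (a i)

/-- A partial algebra over `S`. -/
structure PAlg (S : Sig) where
  carrier : Type
  pop : (f : S.Op) → (Fin (S.arity f) → carrier) → Option carrier

/-- An embedding exhibiting the partial algebra `B` as a substructure of the
total algebra `A`. -/
structure PEmb {S : Sig} (B : PAlg S) (A : Alg S) where
  toFun : B.carrier → A.carrier
  inj : Function.Injective toFun
  map : ∀ (f : S.Op) (b : Fin (S.arity f) → B.carrier) (c : B.carrier),
    B.pop f b = some c → A.op f (fun i => toFun (b i)) = toFun c

/-- `A` is free over the partial algebra `B` (via the substructure embedding `e`):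
every (constant-generated) algebra containing `B` as a substructure is a homomorphic
image of `A` via a homomorphism fixing `B` pointwise. -/
def IsFreeOver {S : Sig} (A : Alg S) (B : PAlg S) (e : PEmb B A) : Prop :=
  ∀ (C : Alg S), GeneratedAlg C → ∀ e' : PEmb B C,
    ∃ h : Hom A C, Function.Surjective h.toFun ∧ ∀ b, h.toFun (e.toFun b) = e'.toFun b

/-- Elements of a partial algebra generated from constants via the defined operations. -/
inductive PGen {S : Sig} (B : PAlg S) : B.carrier → Prop
  | op {f : S.Op} {b : Fin (S.arity f) → B.carrier} {c : B.carrier} :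
      (∀ i, PGen B (b i)) → B.pop f b = some c → PGen B c

/-- A partial algebra is generated by the constants. -/
def PGenerated {S : Sig} (B : PAlg S) : Prop := ∀ x, PGen B x

/-- Raw `B`-terms: terms built over elements of the partial algebra `B`. -/
inductive BTm {S : Sig} (B : PAlg S) : Type
  | base (b : B.carrier) : BTm B
  | app (f : S.Op) (args : Fin (S.arity f) → BTm B) : BTm B

/-- Normal `B`-terms: an application node is allowed only when it cannot be
evaluated in `B`. -/
inductive Normal {S : Sig} {B : PAlg S} : BTm B → Prop
  | base (b : B.carrier) : Normal (BTm.base b)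
  | app {f : S.Op} {args : Fin (S.arity f) → BTm B} :
      (∀ i, Normal (args i)) →
      ¬(∃ (b : Fin (S.arity f) → B.carrier) (c : B.carrier),
          (∀ i, args i = BTm.base (b i)) ∧ B.pop f b = some c) →
      Normal (BTm.app f args)

/-- The free total extension `F(B)` of the partial algebra `B`: its elements are
the normal `B`-terms; an operation evaluates in `B` whenever possible, and forms
a formal term otherwise. -/
noncomputable def FB {S : Sig} (B : PAlg S) : Alg S where
  carrier := {t : BTm B // Normal t}
  op f args :=
    if h : ∃ (b : Fin (S.arity f) → B.carrier) (c : B.carrier),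
        (∀ i, (args i).1 = BTm.base (b i)) ∧ B.pop f b = some c
    then ⟨BTm.base h.choose_spec.choose, Normal.base _⟩
    else ⟨BTm.app f (fun i => (args i).1), Normal.app (fun i => (args i).2) h⟩

/-- The canonical inclusion of `B` into `F(B)`. -/
def embB {S : Sig} (B : PAlg S) (b : B.carrier) : (FB B).carrier :=
  ⟨BTm.base b, Normal.base b⟩

/-- Terms with variables. -/
inductive TmV (S : Sig) : Type
  | var (n : ℕ) : TmV S
  | node (f : S.Op) (args : Fin (S.arity f) → TmV S) : TmV S

/-- Ground substitution into a term with variables. -/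
def TmV.substG {S : Sig} (ρ : ℕ → Tm S) : TmV S → Tm S
  | TmV.var n => ρ n
  | TmV.node f a => Tm.node f (fun i => (a i).substG ρ)

/-- Evaluation of a term with variables under an assignment. -/
def TmV.evalV {S : Sig} (A : Alg S) (ρ : ℕ → A.carrier) : TmV S → A.carrier
  | TmV.var n => ρ n
  | TmV.node f a => A.op f (fun i => (a i).evalV A ρ)

/-- All ground instances of a set of (possibly non-ground) equations. -/
def GroundInstances {S : Sig} (Γ : Set (TmV S × TmV S)) : Set (Tm S × Tm S) :=
  {pq | ∃ e ∈ Γ, ∃ ρ : ℕ → Tm S, pq.1 = e.1.substG ρ ∧ pq.2 = e.2.substG ρ}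

/-- `A ⊨ Γ` for a set of (possibly non-ground) equations. -/
def SatV {S : Sig} (A : Alg S) (Γ : Set (TmV S × TmV S)) : Prop :=
  ∀ e ∈ Γ, ∀ ρ : ℕ → A.carrier, TmV.evalV A ρ e.1 = TmV.evalV A ρ e.2

/-- The finite partial algebra of `∼_Γ`-classes containing a term of height `≤ N`. -/
noncomputable def heightPAlg {S : Sig} (Γ : Set (Tm S × Tm S)) (N : ℕ) : PAlg S where
  carrier := {x : Quotient (thmSetoid Γ) //
    ∃ t : Tm S, t.height ≤ N ∧ Quotient.mk (thmSetoid Γ) t = x}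
  pop f b :=
    if h : ∃ t : Tm S, t.height ≤ N ∧
        Quotient.mk (thmSetoid Γ) t =
          Quotient.mk (thmSetoid Γ) (Tm.node f (fun i => (b i).1.out))
    then some ⟨Quotient.mk (thmSetoid Γ) (Tm.node f (fun i => (b i).1.out)), h⟩
    else none

/-- The set `B = C ∪ ST(Γ₁ ∪ Γ₂)`. -/
def BSet {S : Sig} (Γ₁ Γ₂ : Set (Tm S × Tm S)) : Set (Tm S) :=
  {t | (∃ (c : S.Op) (h : S.arity c = 0), t = constTm S c h) ∨ t ∈ ST (Γ₁ ∪ Γ₂)}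

/-- The partial algebra induced by `Γ` on the `∼_Γ`-classes of terms of `Bs`:
`f` applied to classes is defined iff the class of the resulting term again
contains a term of `Bs`. -/
noncomputable def BAlg {S : Sig} (Γ : Set (Tm S × Tm S)) (Bs : Set (Tm S)) : PAlg S where
  carrier := Quotient (Setoid.comap (Subtype.val : Bs → Tm S) (thmSetoid Γ))
  pop f b :=
    if h : ∃ u : Bs, Thm Γ u.1 (Tm.node f (fun i => ((b i).out).1))
    then some (Quotient.mk (Setoid.comap (Subtype.val : Bs → Tm S) (thmSetoid Γ)) h.choose)
    else none

/-- The class of `t ∈ Bs` as an element of `BAlg Γ Bs`. -/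
noncomputable def BAlgMk {S : Sig} (Γ : Set (Tm S × Tm S)) (Bs : Set (Tm S))
    (t : Tm S) (ht : t ∈ Bs) : (BAlg Γ Bs).carrier :=
  Quotient.mk (Setoid.comap (Subtype.val : Bs → Tm S) (thmSetoid Γ)) ⟨t, ht⟩

/-- Isomorphism of partial algebras: a bijection preserving definedness and
values of the partial operations in both directions. -/
def PIso {S : Sig} (B₁ B₂ : PAlg S) : Prop :=
  ∃ e : B₁.carrier ≃ B₂.carrier,
    ∀ (f : S.Op) (b : Fin (S.arity f) → B₁.carrier),
      Option.map e (B₁.pop f b) = B₂.pop f (fun i => e (b i))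

/-- The algebra structure on `∼_Γ`-classes of `ST(Γ)`, defined via the closure
hypothesis `hf`. -/
noncomputable def STAlg {S : Sig} (Γ : Set (Tm S × Tm S))
    (hf : ∀ (f : S.Op) (a : Fin (S.arity f) → Tm S), (∀ i, a i ∈ ST Γ) →
      ∃ u ∈ ST Γ, Thm Γ (Tm.node f a) u) : Alg S where
  carrier := Quotient (Setoid.comap (Subtype.val : ST Γ → Tm S) (thmSetoid Γ))
  op f a :=
    let h := hf f (fun i => ((a i).out).1) (fun i => ((a i).out).2)
    Quotient.mk (Setoid.comap (Subtype.val : ST Γ → Tm S) (thmSetoid Γ))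
      ⟨h.choose, h.choose_spec.1⟩

/-- The map `φ : F → ST(Γ)` defined inductively by choosing, at each application,
a `∼_Γ`-equivalent member of `ST(Γ)`. -/
noncomputable def phiST {S : Sig} (Γ : Set (Tm S × Tm S))
    (hf : ∀ (f : S.Op) (a : Fin (S.arity f) → Tm S), (∀ i, a i ∈ ST Γ) →
      ∃ u ∈ ST Γ, Thm Γ (Tm.node f a) u) : Tm S → {u : Tm S // u ∈ ST Γ}
  | Tm.node f a =>
      let ih := fun i => phiST Γ hf (a i)
      let h := hf f (fun i => (ih i).1) (fun i => (ih i).2)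
      ⟨h.choose, h.choose_spec.1⟩

/-- The tester predicate `Is_f` on `F(B)`: holds of `a` iff `a ∉ B` and `a` is a
formal term with head symbol `f`. -/
def IsTester {S : Sig} {B : PAlg S} (f : S.Op) (a : (FB B).carrier) : Prop :=
  ∃ args : Fin (S.arity f) → BTm B, a.1 = BTm.app f args


/-! ### Auxiliary lemmas -/

section Aux

variable {S : Sig}

theorem eval_hom {A C : Alg S} (h : Hom A C) (t : Tm S) :
    h.toFun (t.eval A) = t.eval C := by
  induction t with
  | node f a ih =>
    show h.toFun (A.op f fun i => (a i).eval A) = C.op f fun i => (a i).eval C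
    rw [h.map]
    congr 1; funext i; exact ih i

theorem thm_sound {A : Alg S} {Γ : Set (Tm S × Tm S)}
    (hΓ : ∀ p q, (p, q) ∈ Γ → Tm.eval A p = Tm.eval A q)
    {p q : Tm S} (h : Thm Γ p q) : p.eval A = q.eval A := by
  induction h with
  | ax h => exact hΓ _ _ h
  | refl t => rfl
  | symm _ ih => exact ih.symm
  | trans _ _ ih1 ih2 => exact ih1.trans ih2
  | congr _ ih =>
    show Tm.eval A (Tm.node _ _) = Tm.eval A (Tm.node _ _)
    simp only [Tm.eval]
    congr 1; funext i; exact ih i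

theorem out_thm {Γ : Set (Tm S × Tm S)} (t : Tm S) :
    Thm Γ (Quotient.mk (thmSetoid Γ) t).out t :=
  Quotient.exact (Quotient.out_eq (Quotient.mk (thmSetoid Γ) t))

theorem eval_FGamma {Γ : Set (Tm S × Tm S)} (t : Tm S) :
    t.eval (FGamma Γ) = Quotient.mk (thmSetoid Γ) t := by
  induction t with
  | node f a ih =>
    show Quotient.mk (thmSetoid Γ) (Tm.node f fun i => ((a i).eval (FGamma Γ)).out) = _
    apply Quotient.sound
    apply Thm.congr
    intro i
    show Thm Γ ((a i).eval (FGamma Γ)).out (a i)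
    rw [ih i]
    exact out_thm _

theorem generated_FGamma {Γ : Set (Tm S × Tm S)} : GeneratedAlg (FGamma Γ) := by
  intro x
  exact ⟨x.out, by rw [eval_FGamma]; exact Quotient.out_eq x⟩

/-- Composition of homomorphisms. -/
def Hom.comp {A B C : Alg S} (g : Hom B C) (h : Hom A B) : Hom A C where
  toFun x := g.toFun (h.toFun x)
  map f a := by
    show g.toFun (h.toFun (A.op f a)) = _
    rw [h.map, g.map]

theorem bij_inv_hom {A C : Alg S} (h : Hom A C) (hb : Function.Bijective h.toFun) :
    ∃ g : Hom C A, (∀ x, g.toFun (h.toFun x) = x) ∧ (∀ y, h.toFun (g.toFun y) = y) := by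
  obtain ⟨g, hg1, hg2⟩ := Function.bijective_iff_has_inverse.mp hb
  refine ⟨⟨g, ?_⟩, hg1, hg2⟩
  intro f a
  apply hb.injective
  rw [h.map, hg2]
  congr 1; funext i; rw [hg2]

theorem myLiftOut {α β} {s : Setoid α} (g : α → β) (h) (q : Quotient s) :
    Quotient.lift g h q = g q.out := by
  conv_lhs => rw [← Quotient.out_eq q]
  rfl

end Aux

section Backward

variable {S : Sig}

theorem pgen_term {A : Alg S} {B : PAlg S} (e : PEmb B A) {b : B.carrier} (h : PGen B b) :
    ∃ t : Tm S, t.eval A = e.toFun b := by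
  induction h with
  | @op f bb c hb hpop ih =>
    choose t ht using ih
    refine ⟨Tm.node f t, ?_⟩
    show A.op f (fun i => (t i).eval A) = _
    rw [show (fun i => (t i).eval A) = fun i => e.toFun (bb i) from funext ht]
    exact e.map f bb c hpop

theorem backward_dir (S : Sig) [Fintype S.Op] (A : Alg S) (hA : GeneratedAlg A)
    (B : PAlg S) (e : PEmb B A) (hfin : Finite B.carrier) (hgen : PGenerated B)
    (hfree : IsFreeOver A B e) :
    ∃ Γ : Set (Tm S × Tm S), Γ.Finite ∧ AlgIso A (FGamma Γ) := by
  choose tb htb using fun b => pgen_term e (hgen b)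
  set Γ : Set (Tm S × Tm S) :=
    {pq | ∃ (f : S.Op) (b : Fin (S.arity f) → B.carrier) (c : B.carrier),
      B.pop f b = some c ∧ pq = (Tm.node f (fun i => tb (b i)), tb c)} with hΓdef
  have hΓfin : Γ.Finite := by
    have hsub : Γ ⊆ Set.range (fun x : Σ f : S.Op, (Fin (S.arity f) → B.carrier) × B.carrier =>
        (Tm.node x.1 (fun i => tb (x.2.1 i)), tb x.2.2)) := by
      rintro pq ⟨f, b, c, -, rfl⟩
      exact ⟨⟨f, b, c⟩, rfl⟩
    exact (Set.finite_range _).subset hsub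
  have hsound : ∀ p q, (p, q) ∈ Γ → p.eval A = q.eval A := by
    rintro p q ⟨f, b, c, hpop, heq⟩
    injection heq with h1 h2
    subst h1; subst h2
    show A.op f (fun i => (tb (b i)).eval A) = _
    rw [show (fun i => (tb (b i)).eval A) = fun i => e.toFun (b i) from funext fun i => htb _,
      htb c]
    exact e.map f b c hpop
  have evmap : ∀ (f : S.Op) (x : Fin (S.arity f) → (FGamma Γ).carrier),
      Quotient.lift (Tm.eval A) (fun p q h => thm_sound hsound h) ((FGamma Γ).op f x) =
      A.op f (fun i => Quotient.lift (Tm.eval A) (fun p q h => thm_sound hsound h) (x i)) := by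
    intro f x
    show Tm.eval A (Tm.node f fun i => (x i).out) = _
    simp only [Tm.eval]
    congr 1
    funext i
    erw [myLiftOut]
  set ev : Hom (FGamma Γ) A :=
    ⟨Quotient.lift (Tm.eval A) (fun p q h => thm_sound hsound h), evmap⟩ with hevdef
  have e'map : ∀ (f : S.Op) (b : Fin (S.arity f) → B.carrier) (c : B.carrier),
      B.pop f b = some c →
      (FGamma Γ).op f (fun i => Quotient.mk (thmSetoid Γ) (tb (b i))) =
        Quotient.mk (thmSetoid Γ) (tb c) := by
    intro f b c hpop
    apply Quotient.sound
    refine Thm.trans (Thm.congr fun i => ?_) (Thm.ax ⟨f, b, c, hpop, rfl⟩)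
    exact out_thm (tb (b i))
  have e'inj : Function.Injective (fun b => Quotient.mk (thmSetoid Γ) (tb b)) := by
    intro b b' h
    have h2 := thm_sound hsound (Quotient.exact h)
    rw [htb, htb] at h2
    exact e.inj h2
  obtain ⟨h, hsurj, hfix⟩ := hfree (FGamma Γ) generated_FGamma
    ⟨fun b => Quotient.mk (thmSetoid Γ) (tb b), e'inj, e'map⟩
  have key : ∀ x, ev.toFun (h.toFun x) = x := by
    intro x
    obtain ⟨t, rfl⟩ := hA x
    rw [eval_hom h, eval_hom ev]
  have hinj : Function.Injective h.toFun := by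
    intro x y hxy
    rw [← key x, ← key y, hxy]
  exact ⟨Γ, hΓfin, h, hinj, hsurj⟩

end Backward

section Rewriting

variable {S : Sig}

theorem Step.symm' {Γ : Set (Tm S × Tm S)} {p q : Tm S} (h : Step Γ p q) : Step Γ q p := by
  induction h with
  | here h => exact Step.here h.symm
  | @sub f a b i hs hoth ih => exact Step.sub i ih (fun j hj => (hoth j hj).symm)

theorem Step.toThm {Γ : Set (Tm S × Tm S)} {p q : Tm S} (h : Step Γ p q) : Thm Γ p q := by
  induction h with
  | here h =>
    rcases h with h | h
    · exact Thm.ax h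
    · exact Thm.symm (Thm.ax h)
  | @sub f a b i hs hoth ih =>
    apply Thm.congr
    intro j
    by_cases hj : j = i
    · subst hj; exact ih
    · rw [hoth j hj]; exact Thm.refl _

theorem rtg_step_update {Γ : Set (Tm S × Tm S)} {f : S.Op} (a : Fin (S.arity f) → Tm S)
    (i : Fin (S.arity f)) {x y : Tm S} (h : Relation.ReflTransGen (Step Γ) x y) :
    Relation.ReflTransGen (Step Γ) (Tm.node f (Function.update a i x))
      (Tm.node f (Function.update a i y)) := by
  induction h with
  | refl => exact .refl
  | tail h1 h2 ih =>
    refine ih.tail (Step.sub i ?_ ?_)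
    · simpa using h2
    · intro j hj; simp [Function.update_of_ne hj]

theorem rtg_step_congr {Γ : Set (Tm S × Tm S)} {f : S.Op} (a b : Fin (S.arity f) → Tm S)
    (h : ∀ i, Relation.ReflTransGen (Step Γ) (a i) (b i)) :
    Relation.ReflTransGen (Step Γ) (Tm.node f a) (Tm.node f b) := by
  have key : ∀ s : Finset (Fin (S.arity f)),
      Relation.ReflTransGen (Step Γ) (Tm.node f a)
        (Tm.node f (fun i => if i ∈ s then b i else a i)) := by
    intro s
    induction s using Finset.induction with
    | empty => simpa using Relation.ReflTransGen.refl
    | @insert x s hx ih =>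
      have h1 : (fun i => if i ∈ insert x s then b i else a i) =
          Function.update (fun i => if i ∈ s then b i else a i) x (b x) := by
        funext i
        by_cases hix : i = x
        · subst hix; simp
        · simp [Function.update_of_ne hix, Finset.mem_insert, hix]
      have h2 : (fun i => if i ∈ s then b i else a i) =
          Function.update (fun i => if i ∈ s then b i else a i) x (a x) := by
        funext i
        by_cases hix : i = x
        · subst hix; simp [hx]
        · simp [Function.update_of_ne hix]
      have h3 := rtg_step_update (Γ := Γ) (f := f)
        (fun i => if i ∈ s then b i else a i) x (h x)
      rw [← h2] at h3
      rw [← h1] at h3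
      exact ih.trans h3
  have := key Finset.univ
  simpa using this

theorem rtg_step_symm {Γ : Set (Tm S × Tm S)} {p q : Tm S}
    (h : Relation.ReflTransGen (Step Γ) p q) : Relation.ReflTransGen (Step Γ) q p := by
  induction h with
  | refl => exact .refl
  | tail h1 h2 ih => exact Relation.ReflTransGen.head (Step.symm' h2) ih

theorem thm_to_rtg {Γ : Set (Tm S × Tm S)} {p q : Tm S} (h : Thm Γ p q) :
    Relation.ReflTransGen (Step Γ) p q := by
  induction h with
  | ax h => exact Relation.ReflTransGen.single (Step.here (Or.inl h))
  | refl t => exact .refl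
  | symm _ ih => exact rtg_step_symm ih
  | trans _ _ ih1 ih2 => exact ih1.trans ih2
  | congr _ ih => exact rtg_step_congr _ _ ih

theorem subterm_trans {s t u : Tm S} (h1 : Subterm s t) (h2 : Subterm t u) : Subterm s u := by
  induction h2 with
  | refl => exact h1
  | step i h ih => exact Subterm.step i ih

theorem st_children {Δ : Set (Tm S × Tm S)} {f : S.Op} {a : Fin (S.arity f) → Tm S}
    (h : Tm.node f a ∈ ST Δ) (i : Fin (S.arity f)) : a i ∈ ST Δ := by
  obtain ⟨e, he, hsub⟩ := h
  refine ⟨e, he, ?_⟩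
  rcases hsub with h | h
  · exact Or.inl (subterm_trans (Subterm.step i (Subterm.refl _)) h)
  · exact Or.inr (subterm_trans (Subterm.step i (Subterm.refl _)) h)

theorem keyL_aux {Γ : Set (Tm S × Tm S)} {u : Tm S} (hu : u ∈ BSet Γ Γ) :
    ∀ {p : Tm S}, Relation.ReflTransGen (Step Γ) p u →
    ∀ (f : S.Op) (a : Fin (S.arity f) → Tm S), p = Tm.node f a →
    ∃ a' : Fin (S.arity f) → Tm S, (∀ i, a' i ∈ BSet Γ Γ) ∧ (∀ i, Thm Γ (a i) (a' i)) := by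
  intro p hp
  induction hp using Relation.ReflTransGen.head_induction_on with
  | refl =>
    intro f a heq
    rcases hu with ⟨c0, hc0, hcu⟩ | hst
    · rw [heq] at hcu
      simp only [constTm] at hcu
      injection hcu with h1 _
      have hf0 : S.arity f = 0 := by rw [h1]; exact hc0
      exact ⟨a, fun i => absurd i.isLt (by omega), fun i => Thm.refl _⟩
    · rw [heq] at hst
      exact ⟨a, fun i => Or.inr (st_children hst i), fun i => Thm.refl _⟩
  | head hstep hrtg ih =>
    intro f a heq
    subst heq
    cases hstep with
    | here h =>
      rcases h with h | h
      · exact ⟨a, fun i => Or.inr (st_children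
          ⟨_, Or.inl h, Or.inl (Subterm.refl _)⟩ i), fun i => Thm.refl _⟩
      · exact ⟨a, fun i => Or.inr (st_children
          ⟨_, Or.inl h, Or.inr (Subterm.refl _)⟩ i), fun i => Thm.refl _⟩
    | @sub _ _ b i hs hoth =>
      obtain ⟨a', ha'1, ha'2⟩ := ih f b rfl
      refine ⟨a', ha'1, ?_⟩
      intro j
      by_cases hj : j = i
      · subst hj; exact Thm.trans (Step.toThm hs) (ha'2 j)
      · rw [hoth j hj]; exact ha'2 j

theorem keyL {Γ : Set (Tm S × Tm S)} {f : S.Op} {a : Fin (S.arity f) → Tm S} {u : Tm S}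
    (hu : u ∈ BSet Γ Γ) (h : Thm Γ (Tm.node f a) u) :
    ∃ a' : Fin (S.arity f) → Tm S, (∀ i, a' i ∈ BSet Γ Γ) ∧ (∀ i, Thm Γ (a i) (a' i)) :=
  keyL_aux hu (thm_to_rtg h) f a rfl

end Rewriting

section Forward

variable {S : Sig}

/-- The comap setoid on a subset of terms. -/
abbrev bsd (Γ : Set (Tm S × Tm S)) (Bs : Set (Tm S)) : Setoid {x // x ∈ Bs} :=
  Setoid.comap (Subtype.val : Bs → Tm S) (thmSetoid Γ)

theorem bsd_sound {Γ : Set (Tm S × Tm S)} {Bs : Set (Tm S)} {x y : Bs}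
    (h : Thm Γ x.1 y.1) : Quotient.mk (bsd Γ Bs) x = Quotient.mk (bsd Γ Bs) y :=
  Quotient.sound h

theorem bsd_out {Γ : Set (Tm S × Tm S)} {Bs : Set (Tm S)} (x : Bs) :
    Thm Γ ((Quotient.mk (bsd Γ Bs) x).out).1 x.1 :=
  Quotient.exact (Quotient.out_eq (Quotient.mk (bsd Γ Bs) x))

theorem subterm_finite (t : Tm S) : {s : Tm S | Subterm s t}.Finite := by
  induction t with
  | node f a ih =>
    refine Set.Finite.subset (Set.Finite.insert (Tm.node f a) (Set.finite_iUnion ih)) ?_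
    intro s hs
    have hs' : Subterm s (Tm.node f a) := hs
    cases hs' with
    | refl => exact Set.mem_insert _ _
    | step i h => exact Set.mem_insert_iff.mpr (Or.inr (Set.mem_iUnion.mpr ⟨i, h⟩))

theorem st_finite {Δ : Set (Tm S × Tm S)} (h : Δ.Finite) : (ST Δ).Finite := by
  refine Set.Finite.subset (h.biUnion (fun e _ =>
    ((subterm_finite e.1).union (subterm_finite e.2)))) ?_
  rintro t ⟨e, he, ht⟩
  exact Set.mem_biUnion he ht

theorem bset_finite {Γ : Set (Tm S × Tm S)} [Fintype S.Op] (h : Γ.Finite) :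
    (BSet Γ Γ).Finite := by
  have h1 : {t : Tm S | ∃ (c : S.Op) (hc : S.arity c = 0), t = constTm S c hc}.Finite := by
    refine Set.Finite.subset (Set.finite_iUnion
      (fun c : S.Op => Set.Subsingleton.finite
        (s := {t : Tm S | ∃ hc : S.arity c = 0, t = constTm S c hc})
        (by rintro t ⟨h1, rfl⟩ t' ⟨h2, rfl⟩; rfl))) ?_
    rintro t ⟨c, hc, rfl⟩
    exact Set.mem_iUnion.mpr ⟨c, hc, rfl⟩
  refine Set.Finite.subset (Set.Finite.union h1 (st_finite (h.union h))) ?_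
  rintro t (ht | ht)
  · exact Or.inl ht
  · exact Or.inr ht

noncomputable def psi (Γ : Set (Tm S × Tm S)) (Bs : Set (Tm S)) (C : Alg S)
    (g : Quotient (bsd Γ Bs) → C.carrier) : Tm S → C.carrier
  | Tm.node f a =>
      if h : ∃ u : Bs, Thm Γ u.1 (Tm.node f a)
      then g (Quotient.mk (bsd Γ Bs) h.choose)
      else C.op f fun i => psi Γ Bs C g (a i)

theorem psi_typed {Γ : Set (Tm S × Tm S)} {Bs : Set (Tm S)} {C : Alg S}
    {g : Quotient (bsd Γ Bs) → C.carrier} {t : Tm S} {v : Bs} (hv : Thm Γ v.1 t) :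
    psi Γ Bs C g t = g (Quotient.mk (bsd Γ Bs) v) := by
  cases t with
  | node f a =>
    have h : ∃ u : Bs, Thm Γ u.1 (Tm.node f a) := ⟨v, hv⟩
    simp only [psi]
    rw [dif_pos h]
    exact congrArg g (bsd_sound (h.choose_spec.trans (Thm.symm hv)))

theorem psi_thm {Γ : Set (Tm S × Tm S)} {Bs : Set (Tm S)} {C : Alg S}
    {g : Quotient (bsd Γ Bs) → C.carrier}
    (hside : ∀ p q : Tm S, (p, q) ∈ Γ → p ∈ Bs)
    {p q : Tm S} (h : Thm Γ p q) : psi Γ Bs C g p = psi Γ Bs C g q := by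
  induction h with
  | @ax p q hpq =>
    rw [psi_typed (v := ⟨p, hside p q hpq⟩) (Thm.refl p),
        psi_typed (v := ⟨p, hside p q hpq⟩) (Thm.ax hpq)]
  | refl t => rfl
  | symm _ ih => exact ih.symm
  | trans _ _ ih1 ih2 => exact ih1.trans ih2
  | @congr f a b hab ih =>
    by_cases ht : ∃ u : Bs, Thm Γ u.1 (Tm.node f a)
    · obtain ⟨u, hu⟩ := ht
      rw [psi_typed hu, psi_typed (hu.trans (Thm.congr hab))]
    · have ht' : ¬ ∃ u : Bs, Thm Γ u.1 (Tm.node f b) := by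
        rintro ⟨u, hu⟩
        exact ht ⟨u, hu.trans (Thm.symm (Thm.congr hab))⟩
      simp only [psi]
      rw [dif_neg ht, dif_neg ht']
      congr 1; funext i; exact ih i

theorem psi_hom {Γ : Set (Tm S × Tm S)} {C : Alg S} (e'' : PEmb (BAlg Γ (BSet Γ Γ)) C)
    (f : S.Op) (a : Fin (S.arity f) → Tm S) :
    psi Γ (BSet Γ Γ) C e''.toFun (Tm.node f a) =
      C.op f (fun i => psi Γ (BSet Γ Γ) C e''.toFun (a i)) := by
  by_cases ht : ∃ u : BSet Γ Γ, Thm Γ u.1 (Tm.node f a)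
  · obtain ⟨u, hu⟩ := ht
    obtain ⟨a', ha'B, ha'thm⟩ := keyL u.2 (Thm.symm hu)
    set b : Fin (S.arity f) → Quotient (bsd Γ (BSet Γ Γ)) :=
      fun i => Quotient.mk (bsd Γ (BSet Γ Γ)) ⟨a' i, ha'B i⟩ with hbdef
    have hthm1 : Thm Γ (Tm.node f (fun i => ((b i).out).1)) u.1 := by
      refine Thm.trans (Thm.congr fun i => bsd_out _)
        (Thm.trans (Thm.congr fun i => Thm.symm (ha'thm i)) (Thm.symm hu))
    have hcond : ∃ u' : BSet Γ Γ, Thm Γ u'.1 (Tm.node f (fun i => ((b i).out).1)) :=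
      ⟨u, Thm.symm hthm1⟩
    have hpop : (BAlg Γ (BSet Γ Γ)).pop f b =
        some (Quotient.mk (bsd Γ (BSet Γ Γ)) hcond.choose) := dif_pos hcond
    have hmap := e''.map f b _ hpop
    erw [psi_typed hu]
    have harg : (fun i => psi Γ (BSet Γ Γ) C e''.toFun (a i)) = fun i => e''.toFun (b i) :=
      funext fun i => psi_typed (Thm.symm (ha'thm i))
    rw [harg, hmap]
    exact congrArg e''.toFun (bsd_sound (hcond.choose_spec.trans hthm1).symm)
  · simp only [psi]
    rw [dif_neg ht]

noncomputable def embBF (Γ : Set (Tm S × Tm S)) (Bs : Set (Tm S)) :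
    PEmb (BAlg Γ Bs) (FGamma Γ) where
  toFun := Quotient.lift (fun u : Bs => Quotient.mk (thmSetoid Γ) u.1)
    (fun x y h => Quotient.sound h)
  inj := by
    intro x y h
    obtain ⟨u, rfl⟩ := Quotient.exists_rep x
    obtain ⟨v, rfl⟩ := Quotient.exists_rep y
    exact Quotient.sound (Quotient.exact h : Thm Γ u.1 v.1)
  map := by
    intro f b c hpop
    by_cases hcond : ∃ u : Bs, Thm Γ u.1 (Tm.node f (fun i => ((b i).out).1))
    · rw [show (BAlg Γ Bs).pop f b = some (Quotient.mk (bsd Γ Bs) hcond.choose)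
        from dif_pos hcond] at hpop
      obtain rfl := Option.some_injective _ hpop
      have key : Thm Γ (Tm.node f fun i =>
          (Quotient.lift (fun u : Bs => Quotient.mk (thmSetoid Γ) u.1)
            (fun x y h => Quotient.sound h) (b i)).out) hcond.choose.1 := by
        refine Thm.trans (Thm.congr fun i => ?_) (Thm.symm hcond.choose_spec)
        erw [myLiftOut]
        exact out_thm _
      exact Quotient.sound key
    · rw [show (BAlg Γ Bs).pop f b = none from dif_neg hcond] at hpop
      exact absurd hpop (by simp)

theorem bgen {Γ : Set (Tm S × Tm S)} : PGenerated (BAlg Γ (BSet Γ Γ)) := by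
  have key : ∀ t : Tm S, ∀ ht : t ∈ BSet Γ Γ,
      PGen (BAlg Γ (BSet Γ Γ)) (Quotient.mk (bsd Γ (BSet Γ Γ)) ⟨t, ht⟩) := by
    intro t
    induction t with
    | node f a ih =>
      intro ht
      have ht' := ht
      rcases ht' with ⟨c0, hc0, hconst⟩ | hst
      · -- constant case
        simp only [constTm] at hconst
        injection hconst with h1 _
        have hf0 : S.arity f = 0 := by rw [h1]; exact hc0
        set b : Fin (S.arity f) → (BAlg Γ (BSet Γ Γ)).carrier :=
          fun i => absurd i.isLt (by omega) with hb
        have hcond : ∃ u : BSet Γ Γ, Thm Γ u.1 (Tm.node f (fun i => ((b i).out).1)) :=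
          ⟨⟨Tm.node f a, ht⟩, Thm.congr fun i => absurd i.isLt (by omega)⟩
        have hpop : (BAlg Γ (BSet Γ Γ)).pop f b =
            some (Quotient.mk (bsd Γ (BSet Γ Γ)) ⟨Tm.node f a, ht⟩) := by
          rw [show (BAlg Γ (BSet Γ Γ)).pop f b =
            some (Quotient.mk (bsd Γ (BSet Γ Γ)) hcond.choose) from dif_pos hcond]
          refine congrArg some (bsd_sound ?_)
          exact hcond.choose_spec.trans (Thm.congr fun i => absurd i.isLt (by omega))
        exact PGen.op (fun i => absurd i.isLt (by omega)) hpop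
      · -- subterm case
        set b : Fin (S.arity f) → (BAlg Γ (BSet Γ Γ)).carrier :=
          fun i => Quotient.mk (bsd Γ (BSet Γ Γ)) ⟨a i, Or.inr (st_children hst i)⟩ with hb
        have hthm : Thm Γ (Tm.node f (fun i => ((b i).out).1)) (Tm.node f a) :=
          Thm.congr fun i => bsd_out _
        have hcond : ∃ u : BSet Γ Γ, Thm Γ u.1 (Tm.node f (fun i => ((b i).out).1)) :=
          ⟨⟨Tm.node f a, ht⟩, Thm.symm hthm⟩
        have hpop : (BAlg Γ (BSet Γ Γ)).pop f b =
            some (Quotient.mk (bsd Γ (BSet Γ Γ)) ⟨Tm.node f a, ht⟩) := by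
          rw [show (BAlg Γ (BSet Γ Γ)).pop f b =
            some (Quotient.mk (bsd Γ (BSet Γ Γ)) hcond.choose) from dif_pos hcond]
          exact congrArg some (bsd_sound (hcond.choose_spec.trans hthm))
        exact PGen.op (fun i => ih i _) hpop
  intro x
  obtain ⟨u, rfl⟩ := Quotient.exists_rep x
  exact key u.1 u.2

theorem free_forward {Γ : Set (Tm S × Tm S)} :
    IsFreeOver (FGamma Γ) (BAlg Γ (BSet Γ Γ)) (embBF Γ (BSet Γ Γ)) := by
  intro C hC e''
  have hside : ∀ p q : Tm S, (p, q) ∈ Γ → p ∈ BSet Γ Γ := fun p q h =>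
    Or.inr ⟨(p, q), Or.inl h, Or.inl (Subterm.refl _)⟩
  set hfun : (FGamma Γ).carrier → C.carrier :=
    Quotient.lift (psi Γ (BSet Γ Γ) C e''.toFun) (fun p q hpq => psi_thm hside hpq)
    with hfdef
  have hmap : ∀ (f : S.Op) (x : Fin (S.arity f) → (FGamma Γ).carrier),
      hfun ((FGamma Γ).op f x) = C.op f (fun i => hfun (x i)) := by
    intro f x
    show psi Γ (BSet Γ Γ) C e''.toFun (Tm.node f fun i => (x i).out) = _
    rw [psi_hom]
    congr 1
    funext i
    erw [hfdef, myLiftOut]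
  refine ⟨⟨hfun, hmap⟩, ?_, ?_⟩
  · intro c
    obtain ⟨t, rfl⟩ := hC c
    induction t with
    | node f a ih =>
      choose x hx using ih
      refine ⟨(FGamma Γ).op f x, ?_⟩
      show hfun ((FGamma Γ).op f x) = Tm.eval C (Tm.node f a)
      rw [hmap]
      show C.op f _ = C.op f _
      congr 1
      funext i
      exact hx i
  · intro b
    obtain ⟨u, rfl⟩ := Quotient.exists_rep b
    show psi Γ (BSet Γ Γ) C e''.toFun u.1 = _
    exact psi_typed (Thm.refl u.1)

theorem forward_dir (S : Sig) [Fintype S.Op] (A : Alg S)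
    (Γ : Set (Tm S × Tm S)) (hfin : Γ.Finite) (h : Hom A (FGamma Γ))
    (hbij : Function.Bijective h.toFun) :
    ∃ (B : PAlg S) (e : PEmb B A),
      Finite B.carrier ∧ PGenerated B ∧ IsFreeOver A B e := by
  obtain ⟨g, hg1, hg2⟩ := bij_inv_hom h hbij
  have hginj : Function.Injective g.toFun := by
    intro x y hxy
    rw [← hg2 x, ← hg2 y, hxy]
  refine ⟨BAlg Γ (BSet Γ Γ),
    ⟨fun b => g.toFun ((embBF Γ (BSet Γ Γ)).toFun b),
     fun x y hxy => (embBF Γ (BSet Γ Γ)).inj (hginj hxy),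
     ?_⟩, ?_, bgen, ?_⟩
  · intro f b c hpop
    show A.op f (fun i => g.toFun ((embBF Γ (BSet Γ Γ)).toFun (b i))) = _
    rw [← g.map, (embBF Γ (BSet Γ Γ)).map f b c hpop]
  · haveI : Finite ↥(BSet Γ Γ) := (bset_finite hfin).to_subtype
    exact Quotient.finite _
  · intro C hC e''
    obtain ⟨k, ksurj, kfix⟩ := free_forward C hC e''
    refine ⟨k.comp h, ksurj.comp hbij.surjective, ?_⟩
    intro b
    show k.toFun (h.toFun (g.toFun ((embBF Γ (BSet Γ Γ)).toFun b))) = _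
    rw [hg2]
    exact kfix b

end Forward

/-- A (constant-generated) algebra `A` is almost free (isomorphic to `F_Γ`
for some finite set `Γ` of ground term equations) iff it is free over some finite
partial algebra `B`. -/
theorem stmt5 (S : Sig) [Fintype S.Op] (A : Alg S) (hA : GeneratedAlg A) :
    (∃ Γ : Set (Tm S × Tm S), Γ.Finite ∧ AlgIso A (FGamma Γ)) ↔
    (∃ (B : PAlg S) (e : PEmb B A),
      Finite B.carrier ∧ PGenerated B ∧ IsFreeOver A B e) := by
  constructor
  · rintro ⟨Γ, hfin, h, hbij⟩
    exact forward_dir S A Γ hfin h hbij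
  · rintro ⟨B, e, hfin, hgen, hfree⟩
    exact backward_dir S A hA B e hfin hgen hfree

end AFA
end

section
/- Let Γ be a finite set of ground term equations and N the maximum height of a term occurring in Γ. Define the finite partial algebra B whose elements are the ∼_Γ-congruence classes containing a term of height at most N, with partial operations induced from F_Γ (f applied to classes in B is defined iff the resulting class is again in B). Then F_Γ is isomorphic to the free extension F(B). -/
namespace AFA

open Classical

/-! ### Auxiliary machinery for Statement 6 -/

section Stmt6Aux

variable {S : Sig}

/-- Unfold `FB .op` when the operation is defined in `B`. -/
lemma FB_op_base (B : PAlg S) (f : S.Op)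
    (args : Fin (S.arity f) → (FB B).carrier)
    (b : Fin (S.arity f) → B.carrier) (c : B.carrier)
    (hargs : ∀ i, (args i).1 = BTm.base (b i)) (hc : B.pop f b = some c) :
    (FB B).op f args = ⟨BTm.base c, Normal.base c⟩ := by
  have h : ∃ (b' : Fin (S.arity f) → B.carrier) (c' : B.carrier),
      (∀ i, (args i).1 = BTm.base (b' i)) ∧ B.pop f b' = some c' := ⟨b, c, hargs, hc⟩
  have hb : h.choose = b := by
    funext i
    have h1 := h.choose_spec.choose_spec.1 i
    rw [hargs i] at h1
    injection h1.symm
  have hcc : h.choose_spec.choose = c := by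
    have h2 : B.pop f b = some h.choose_spec.choose :=
      (congrArg (B.pop f) hb).symm.trans h.choose_spec.choose_spec.2
    exact ((Option.some.injEq _ _).mp (hc.symm.trans h2)).symm
  show (if h : _ then _ else _) = _
  refine (dif_pos h).trans ?_
  exact Subtype.ext (congrArg BTm.base hcc)

/-- Unfold `FB .op` when the operation is not defined in `B`. -/
lemma FB_op_app (B : PAlg S) (f : S.Op)
    (args : Fin (S.arity f) → (FB B).carrier)
    (h : ¬ ∃ (b : Fin (S.arity f) → B.carrier) (c : B.carrier),
      (∀ i, (args i).1 = BTm.base (b i)) ∧ B.pop f b = some c) :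
    (FB B).op f args = ⟨BTm.app f (fun i => (args i).1),
      Normal.app (fun i => (args i).2) h⟩ := by
  show (if h : _ then _ else _) = _
  exact dif_neg h

lemma heightPAlg_pop_some (Γ : Set (Tm S × Tm S)) (N : ℕ) (f : S.Op)
    (b : Fin (S.arity f) → (heightPAlg Γ N).carrier) (c : (heightPAlg Γ N).carrier)
    (hc : (heightPAlg Γ N).pop f b = some c) :
    c.1 = Quotient.mk (thmSetoid Γ) (Tm.node f (fun i => (b i).1.out)) := by
  by_cases h : ∃ t : Tm S, t.height ≤ N ∧
      Quotient.mk (thmSetoid Γ) t =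
        Quotient.mk (thmSetoid Γ) (Tm.node f (fun i => (b i).1.out))
  · have : (heightPAlg Γ N).pop f b
        = some ⟨Quotient.mk (thmSetoid Γ) (Tm.node f (fun i => (b i).1.out)), h⟩ := dif_pos h
    rw [this] at hc
    exact congrArg Subtype.val ((Option.some.injEq _ _).mp hc).symm
  · have : (heightPAlg Γ N).pop f b = none := dif_neg h
    rw [this] at hc; exact absurd hc (by simp)

lemma child_height_le {f : S.Op} {a : Fin (S.arity f) → Tm S} {N : ℕ}
    (h : (Tm.node f a).height ≤ N) (i : Fin (S.arity f)) : (a i).height ≤ N := by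
  have : (a i).height + 1 ≤ (Tm.node f a).height :=
    Finset.le_sup (f := fun i => (a i).height + 1) (Finset.mem_univ i)
  omega

/-- Terms of height `≤ N` evaluate in `F(B)` to the base element given by their class. -/
lemma eval_low (Γ : Set (Tm S × Tm S)) (N : ℕ) (t : Tm S) (ht : t.height ≤ N) :
    t.eval (FB (heightPAlg Γ N)) =
      ⟨BTm.base ⟨Quotient.mk (thmSetoid Γ) t, ⟨t, ht, rfl⟩⟩, Normal.base _⟩ := by
  induction t with
  | node f a ih =>
    have hch : ∀ i, (a i).height ≤ N := fun i => child_height_le ht i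
    set b : Fin (S.arity f) → (heightPAlg Γ N).carrier :=
      fun i => ⟨Quotient.mk (thmSetoid Γ) (a i), ⟨a i, hch i, rfl⟩⟩ with hbdef
    have hout : ∀ i, Thm Γ ((b i).1.out) (a i) := fun i =>
      Quotient.exact ((Quotient.out_eq (b i).1).trans rfl)
    have hnodeq : Quotient.mk (thmSetoid Γ) (Tm.node f (fun i => (b i).1.out))
        = Quotient.mk (thmSetoid Γ) (Tm.node f a) :=
      Quotient.sound (Thm.congr fun i => hout i)
    have hcond : ∃ t' : Tm S, t'.height ≤ N ∧
        Quotient.mk (thmSetoid Γ) t' =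
          Quotient.mk (thmSetoid Γ) (Tm.node f (fun i => (b i).1.out)) :=
      ⟨Tm.node f a, ht, hnodeq.symm⟩
    have hpop : (heightPAlg Γ N).pop f b
        = some ⟨Quotient.mk (thmSetoid Γ) (Tm.node f (fun i => (b i).1.out)), hcond⟩ :=
      dif_pos hcond
    have hargs : ∀ i, ((a i).eval (FB (heightPAlg Γ N))).1 = BTm.base (b i) := by
      intro i; rw [ih i (hch i)]
    have : (Tm.node f a).eval (FB (heightPAlg Γ N))
        = (FB (heightPAlg Γ N)).op f (fun i => (a i).eval (FB (heightPAlg Γ N))) := rfl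
    rw [this, FB_op_base _ f _ b _ hargs hpop]
    exact Subtype.ext (congrArg BTm.base (Subtype.ext hnodeq))

/-- Read back the class of a `B`-term. -/
noncomputable def evB (Γ : Set (Tm S × Tm S)) (N : ℕ) :
    BTm (heightPAlg Γ N) → Quotient (thmSetoid Γ)
  | .base b => b.1
  | .app f a => Quotient.mk (thmSetoid Γ) (Tm.node f (fun i => (evB Γ N (a i)).out))

/-- `evB` is a retraction of evaluation: it recovers the `∼_Γ`-class. -/
lemma evB_eval (Γ : Set (Tm S × Tm S)) (N : ℕ) (t : Tm S) :
    evB Γ N (t.eval (FB (heightPAlg Γ N))).1 = Quotient.mk (thmSetoid Γ) t := by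
  induction t with
  | node f a ih =>
    have hev : (Tm.node f a).eval (FB (heightPAlg Γ N))
        = (FB (heightPAlg Γ N)).op f (fun i => (a i).eval (FB (heightPAlg Γ N))) := rfl
    by_cases h : ∃ (b : Fin (S.arity f) → (heightPAlg Γ N).carrier)
        (c : (heightPAlg Γ N).carrier),
        (∀ i, ((a i).eval (FB (heightPAlg Γ N))).1 = BTm.base (b i)) ∧
          (heightPAlg Γ N).pop f b = some c
    · obtain ⟨b, c, hargs, hc⟩ := h
      rw [hev, FB_op_base _ f _ b c hargs hc]
      show c.1 = _
      rw [heightPAlg_pop_some Γ N f b c hc]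
      refine Quotient.sound (Thm.congr fun i => ?_)
      have hbi : (b i).1 = Quotient.mk (thmSetoid Γ) (a i) := by
        have := ih i
        rw [hargs i] at this
        exact this
      have : Quotient.mk (thmSetoid Γ) ((b i).1.out) = Quotient.mk (thmSetoid Γ) (a i) :=
        (Quotient.out_eq (b i).1).trans hbi
      exact Quotient.exact this
    · rw [hev, FB_op_app _ f _ h]
      show Quotient.mk (thmSetoid Γ) (Tm.node f fun i =>
          (evB Γ N ((a i).eval (FB (heightPAlg Γ N))).1).out) = _
      refine Quotient.sound (Thm.congr fun i => ?_)
      have : Quotient.mk (thmSetoid Γ)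
          (evB Γ N ((a i).eval (FB (heightPAlg Γ N))).1).out
          = Quotient.mk (thmSetoid Γ) (a i) :=
        (Quotient.out_eq _).trans (ih i)
      exact Quotient.exact this

/-- Evaluation in `F(B)` respects `∼_Γ`, provided all sides of `Γ` have height `≤ N`. -/
lemma eval_wd (Γ : Set (Tm S × Tm S)) (N : ℕ)
    (hle : ∀ e ∈ Γ, e.1.height ≤ N ∧ e.2.height ≤ N)
    {p q : Tm S} (h : Thm Γ p q) :
    p.eval (FB (heightPAlg Γ N)) = q.eval (FB (heightPAlg Γ N)) := by
  induction h with
  | ax hpq =>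
    rename_i p q
    obtain ⟨h1, h2⟩ := hle _ hpq
    rw [eval_low Γ N p h1, eval_low Γ N q h2]
    exact Subtype.ext (congrArg BTm.base (Subtype.ext (Quotient.sound (Thm.ax hpq))))
  | refl t => rfl
  | symm _ ih => exact ih.symm
  | trans _ _ ih1 ih2 => exact ih1.trans ih2
  | congr hab ih =>
    rename_i f a b
    show (FB (heightPAlg Γ N)).op f _ = (FB (heightPAlg Γ N)).op f _
    exact congrArg _ (funext ih)

/-- Every normal `B`-term is the value of a ground term. -/
lemma eval_surj (Γ : Set (Tm S × Tm S)) (N : ℕ) (n : BTm (heightPAlg Γ N))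
    (hn : Normal n) : ∃ t : Tm S, t.eval (FB (heightPAlg Γ N)) = ⟨n, hn⟩ := by
  induction hn with
  | base b =>
    obtain ⟨t, ht, hq⟩ := b.2
    refine ⟨t, ?_⟩
    rw [eval_low Γ N t ht]
    exact Subtype.ext (congrArg BTm.base (Subtype.ext hq))
  | app hnorm hnot ih =>
    rename_i f args
    choose s hs using ih
    refine ⟨Tm.node f s, ?_⟩
    have hev : (Tm.node f s).eval (FB (heightPAlg Γ N))
        = (FB (heightPAlg Γ N)).op f (fun i => (s i).eval (FB (heightPAlg Γ N))) := rfl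
    have h : ¬ ∃ (b : Fin (S.arity f) → (heightPAlg Γ N).carrier)
        (c : (heightPAlg Γ N).carrier),
        (∀ i, ((s i).eval (FB (heightPAlg Γ N))).1 = BTm.base (b i)) ∧
          (heightPAlg Γ N).pop f b = some c := by
      rintro ⟨b, c, hb, hc⟩
      exact hnot ⟨b, c, fun i => by rw [← hb i, hs i], hc⟩
    rw [hev, FB_op_app _ f _ h]
    refine Subtype.ext ?_
    show BTm.app f _ = BTm.app f args
    exact congrArg _ (funext fun i => by rw [hs i])

end Stmt6Aux

/-- Let `N` be the maximum height of a term occurring in `Γ` and `B` the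
finite partial algebra of `∼_Γ`-classes containing a term of height at most `N`, with
partial operations induced from `F_Γ`. Then `F_Γ ≅ F(B)`. -/
theorem stmt6 (S : Sig) [Fintype S.Op] (Γ : Finset (Tm S × Tm S)) (N : ℕ)
    (hN : N = Γ.sup fun e => max e.1.height e.2.height) :
    AlgIso (FGamma (↑Γ : Set (Tm S × Tm S))) (FB (heightPAlg (↑Γ : Set (Tm S × Tm S)) N)) := by
  set G : Set (Tm S × Tm S) := (↑Γ : Set (Tm S × Tm S)) with hG
  have hle : ∀ e ∈ G, e.1.height ≤ N ∧ e.2.height ≤ N := by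
    intro e he
    have : max e.1.height e.2.height ≤ N := by
      rw [hN]; exact Finset.le_sup (f := fun e => max e.1.height e.2.height) he
    omega
  set B := heightPAlg G N with hB
  let φ : (FGamma G).carrier → (FB B).carrier :=
    Quotient.lift (fun t => t.eval (FB B)) (fun p q h => eval_wd G N hle h)
  have hφmk : ∀ t : Tm S, φ (Quotient.mk (thmSetoid G) t) = t.eval (FB B) := fun _ => rfl
  refine ⟨⟨φ, ?_⟩, ?_, ?_⟩
  · intro f a
    have h1 : (FGamma G).op f a
        = Quotient.mk (thmSetoid G) (Tm.node f (fun i => (a i).out)) := rfl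
    rw [h1, hφmk]
    show (FB B).op f (fun i => (a i).out.eval (FB B)) = _
    refine congrArg _ (funext fun i => ?_)
    conv_rhs => rw [← Quotient.out_eq (a i)]
    exact (hφmk _).symm
  · intro x y hxy
    have h1 : φ x = φ y := hxy
    rw [← Quotient.out_eq x, ← Quotient.out_eq y] at h1
    rw [hφmk, hφmk] at h1
    have h2 := congrArg (fun z : (FB B).carrier => evB G N z.1) h1
    rw [← Quotient.out_eq x, ← Quotient.out_eq y]
    exact (evB_eval G N x.out).symm.trans (h2.trans (evB_eval G N y.out))
  · rintro ⟨n, hn⟩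
    obtain ⟨t, ht⟩ := eval_surj G N n hn
    exact ⟨Quotient.mk (thmSetoid G) t, ht⟩

end AFA
end

section
/- Fix a finite set Γ of ground term equations and for each ∼_Γ-congruence class choose a representative via the map rep defined by replacing, in a given term t, each maximal subterm equivalent to some term mentioned in Γ by a fixed chosen representative of its class. Then rep satisfies: (1) t ∼_Γ rep(t) for all ground terms t, and (2) for all ground terms s, t, s ∼_Γ t if and only if rep(s) and rep(t) are equal as terms. -/
namespace AFA

open Classical

private lemma step_thm {S : Sig} {Γ : Set (Tm S × Tm S)} {s t : Tm S}
    (h : Step Γ s t) : Thm Γ s t := by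
  induction h with
  | here h =>
    rcases h with h | h
    · exact Thm.ax h
    · exact Thm.symm (Thm.ax h)
  | sub i hst heq ih =>
    refine Thm.congr fun j => ?_
    by_cases hj : j = i
    · subst hj; exact ih
    · rw [heq j hj]; exact Thm.refl _

private lemma eqvGen_lift {α β : Type*} {r : α → α → Prop} {r' : β → β → Prop} (g : α → β)
    (hg : ∀ x y, r x y → r' (g x) (g y)) {x y : α} (h : Relation.EqvGen r x y) :
    Relation.EqvGen r' (g x) (g y) := by
  induction h with
  | rel x y h => exact .rel _ _ (hg _ _ h)
  | refl => exact .refl _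
  | symm _ _ _ ih => exact .symm _ _ ih
  | trans _ _ _ _ _ ih1 ih2 => exact .trans _ _ _ ih1 ih2

private lemma step_update {S : Sig} {Γ : Set (Tm S × Tm S)} (f : S.Op)
    (c : Fin (S.arity f) → Tm S) (i : Fin (S.arity f)) {x y : Tm S} (h : Step Γ x y) :
    Step Γ (Tm.node f (Function.update c i x)) (Tm.node f (Function.update c i y)) := by
  refine Step.sub i ?_ ?_
  · simpa using h
  · intro j hj; simp [Function.update_of_ne hj]

private lemma eqvGen_congr {S : Sig} {Γ : Set (Tm S × Tm S)} (f : S.Op)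
    (a b : Fin (S.arity f) → Tm S)
    (h : ∀ i, Relation.EqvGen (Step Γ) (a i) (b i)) :
    Relation.EqvGen (Step Γ) (Tm.node f a) (Tm.node f b) := by
  have key : ∀ s : Finset (Fin (S.arity f)),
      Relation.EqvGen (Step Γ) (Tm.node f a)
        (Tm.node f fun j => if j ∈ s then b j else a j) := by
    intro s
    induction s using Finset.induction with
    | empty => simpa using Relation.EqvGen.refl (Tm.node f a)
    | @insert i s hi ih =>
      refine ih.trans _ _ _ ?_
      set g : Fin (S.arity f) → Tm S := fun j => if j ∈ s then b j else a j with hg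
      have h1 : (fun j => if j ∈ insert i s then b j else a j)
          = Function.update g i (b i) := by
        funext j
        by_cases hj : j = i
        · subst hj; simp [Function.update_self]
        · simp [Function.update_of_ne hj, hj, hg]
      have h2 : Tm.node f g = Tm.node f (Function.update g i (g i)) := by
        rw [Function.update_eq_self]
      have hgi : g i = a i := by simp [hg, hi]
      rw [h1, h2, hgi]
      exact eqvGen_lift (fun x => Tm.node f (Function.update g i x))
        (fun x y hxy => step_update f g i hxy) (h i)
  simpa using key Finset.univ

private lemma thm_eqvGen {S : Sig} {Γ : Set (Tm S × Tm S)} {s t : Tm S}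
    (h : Thm Γ s t) : Relation.EqvGen (Step Γ) s t := by
  induction h with
  | ax h => exact .rel _ _ (Step.here (Or.inl h))
  | refl t => exact .refl t
  | symm _ ih => exact .symm _ _ ih
  | trans _ _ ih1 ih2 => exact .trans _ _ _ ih1 ih2
  | congr _ ih => exact eqvGen_congr _ _ _ ih

private lemma repMap_pos {S : Sig} (Γ : Set (Tm S × Tm S)) (r : Tm S → Tm S)
    {t : Tm S} (h : HasType Γ t) : repMap Γ r t = r t := by
  cases t with
  | node f a => rw [repMap, if_pos h]

private lemma repMap_neg {S : Sig} (Γ : Set (Tm S × Tm S)) (r : Tm S → Tm S)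
    {f : S.Op} {a : Fin (S.arity f) → Tm S} (h : ¬ HasType Γ (Tm.node f a)) :
    repMap Γ r (Tm.node f a) = Tm.node f fun i => repMap Γ r (a i) := by
  rw [repMap, if_neg h]

private lemma rep_thm {S : Sig} (Γ : Set (Tm S × Tm S)) (r : Tm S → Tm S)
    (hr1 : ∀ t, HasType Γ t → Thm Γ t (r t)) :
    ∀ t, Thm Γ t (repMap Γ r t)
  | Tm.node f a => by
    by_cases h : HasType Γ (Tm.node f a)
    · rw [repMap_pos Γ r h]; exact hr1 _ h
    · rw [repMap_neg Γ r h]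
      exact Thm.congr fun i => rep_thm Γ r hr1 (a i)

private lemma hasType_of_thm {S : Sig} {Γ : Set (Tm S × Tm S)} {s t : Tm S}
    (h : Thm Γ s t) (hs : HasType Γ s) : HasType Γ t := by
  obtain ⟨p, hp, hsp⟩ := hs
  exact ⟨p, hp, Thm.trans (Thm.symm h) hsp⟩

private lemma rep_step {S : Sig} {Γ : Set (Tm S × Tm S)} {r : Tm S → Tm S}
    (hr2 : ∀ s t, HasType Γ s → Thm Γ s t → r s = r t) :
    ∀ {s t : Tm S}, Step Γ s t → repMap Γ r s = repMap Γ r t := by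
  intro s t h
  induction h with
  | @here p q h =>
    have hside : SideOf Γ p := by
      rcases h with h | h
      · exact ⟨(p, q), h, Or.inl rfl⟩
      · exact ⟨(q, p), h, Or.inr rfl⟩
    have hpq : Thm Γ p q := step_thm (Step.here h)
    have hT : HasType Γ p := ⟨p, hside, Thm.refl p⟩
    have hTq : HasType Γ q := hasType_of_thm hpq hT
    rw [repMap_pos Γ r hT, repMap_pos Γ r hTq, hr2 p q hT hpq]
  | @sub f a b i hst heq ih =>
    have hthm : Thm Γ (Tm.node f a) (Tm.node f b) := step_thm (Step.sub i hst heq)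
    by_cases hT : HasType Γ (Tm.node f a)
    · have hT' := hasType_of_thm hthm hT
      rw [repMap_pos Γ r hT, repMap_pos Γ r hT', hr2 _ _ hT hthm]
    · have hT' : ¬ HasType Γ (Tm.node f b) := fun h' =>
        hT (hasType_of_thm (Thm.symm hthm) h')
      rw [repMap_neg Γ r hT, repMap_neg Γ r hT']
      congr 1
      funext j
      by_cases hj : j = i
      · subst hj; exact ih
      · rw [heq j hj]

/-- Let `r` assign to each typed term the fixed chosen representative of
its type (so `r t ∼_Γ t`, and `r` is constant on `∼_Γ`-classes of typed terms). Then the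
canonical representative map `rep` (replacing each maximal typed subterm by its chosen
representative) satisfies: (1) `t ∼_Γ rep t`; (2) `s ∼_Γ t ↔ rep s = rep t` as terms. -/
theorem stmt7 (S : Sig) [Fintype S.Op] (Γ : Set (Tm S × Tm S)) (hΓ : Γ.Finite)
    (r : Tm S → Tm S)
    (hr1 : ∀ t, HasType Γ t → Thm Γ t (r t))
    (hr2 : ∀ s t, HasType Γ s → Thm Γ s t → r s = r t) :
    (∀ t, Thm Γ t (repMap Γ r t)) ∧
    (∀ s t, Thm Γ s t ↔ repMap Γ r s = repMap Γ r t) := by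
  have h1 : ∀ t, Thm Γ t (repMap Γ r t) := rep_thm Γ r hr1
  have h2 : ∀ {s t : Tm S}, Relation.EqvGen (Step Γ) s t →
      repMap Γ r s = repMap Γ r t := by
    intro s t h
    induction h with
    | rel _ _ h => exact rep_step hr2 h
    | refl => rfl
    | symm _ _ _ ih => exact ih.symm
    | trans _ _ _ _ _ ih1 ih2 => exact ih1.trans ih2
  refine ⟨h1, fun s t => ⟨fun h => h2 (thm_eqvGen h), fun h => ?_⟩⟩
  exact Thm.trans (Thm.trans (h1 s) (h ▸ Thm.refl _)) (Thm.symm (h1 t))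

end AFA
end

section
/- Let Γ be a finite set of ground term equations. Every ∼_Γ-congruence class of ground terms is infinite if and only if every constant symbol of Σ is of cyclic type. -/
namespace AFA

open Classical

section Aux

variable {S : Sig} {Γ : Set (Tm S × Tm S)}

lemma node_height (f : S.Op) (a : Fin (S.arity f) → Tm S) :
    (Tm.node f a).height = Finset.univ.sup fun i => (a i).height + 1 := rfl

lemma child_height_lt (f : S.Op) (a : Fin (S.arity f) → Tm S) (i : Fin (S.arity f)) :
    (a i).height + 1 ≤ (Tm.node f a).height :=
  Finset.le_sup (f := fun i => (a i).height + 1) (Finset.mem_univ i)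

lemma thm_of_step {p q : Tm S} (h : Step Γ p q) : Thm Γ p q := by
  induction h with
  | here h =>
      rcases h with h | h
      · exact Thm.ax h
      · exact Thm.symm (Thm.ax h)
  | sub i hst hagree ih =>
      refine Thm.congr fun j => ?_
      by_cases hj : j = i
      · subst hj; exact ih
      · rw [hagree j hj]; exact Thm.refl _

lemma step_symm {p q : Tm S} (h : Step Γ p q) : Step Γ q p := by
  induction h with
  | here h => exact Step.here h.symm
  | sub i hst hagree ih =>
      exact Step.sub i ih (fun j hj => (hagree j hj).symm)

lemma rtg_update {f : S.Op} {u v : Tm S}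
    (h : Relation.ReflTransGen (Step Γ) u v) :
    ∀ (a : Fin (S.arity f) → Tm S) (i : Fin (S.arity f)), a i = u →
      Relation.ReflTransGen (Step Γ) (Tm.node f a) (Tm.node f (Function.update a i v)) := by
  induction h using Relation.ReflTransGen.head_induction_on with
  | refl =>
      intro a i hai
      rw [← hai, Function.update_eq_self]
  | head hst hrest ih =>
      rename_i x c
      intro a i hai
      refine Relation.ReflTransGen.head (Step.sub (b := Function.update a i c) i ?_ ?_) ?_
      · rw [hai, Function.update_self]; exact hst
      · intro j hj; rw [Function.update_of_ne hj]
      · have := ih (Function.update a i c) i (Function.update_self _ _ _)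
        rwa [Function.update_idem] at this

lemma rtg_congr {f : S.Op} {a b : Fin (S.arity f) → Tm S}
    (h : ∀ i, Relation.ReflTransGen (Step Γ) (a i) (b i)) :
    Relation.ReflTransGen (Step Γ) (Tm.node f a) (Tm.node f b) := by
  have key : ∀ (s : Finset (Fin (S.arity f))) (a : Fin (S.arity f) → Tm S),
      (∀ i, Relation.ReflTransGen (Step Γ) (a i) (b i)) →
      (∀ i ∉ s, a i = b i) →
      Relation.ReflTransGen (Step Γ) (Tm.node f a) (Tm.node f b) := by
    intro s
    induction s using Finset.induction with
    | empty =>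
        intro a _ hout
        have : a = b := funext fun i => hout i (Finset.notMem_empty i)
        rw [this]
    | insert i s hnotmem ih =>
        intro a hall hout
        refine Relation.ReflTransGen.trans (rtg_update (hall i) a i rfl) ?_
        refine ih _ ?_ ?_
        · intro j
          by_cases hj : j = i
          · subst hj; rw [Function.update_self]
          · rw [Function.update_of_ne hj]; exact hall j
        · intro j hj
          by_cases hji : j = i
          · subst hji; rw [Function.update_self]
          · rw [Function.update_of_ne hji]
            exact hout j (by simp [hji, hj])
  exact key Finset.univ a (fun i => h i) (fun i hi => absurd (Finset.mem_univ i) hi)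

lemma thm_iff_rtg {p q : Tm S} :
    Thm Γ p q ↔ Relation.ReflTransGen (Step Γ) p q := by
  constructor
  · intro h
    induction h with
    | ax h => exact Relation.ReflTransGen.single (Step.here (Or.inl h))
    | refl t => exact Relation.ReflTransGen.refl
    | symm h ih =>
        exact (haveI : Std.Symm (Step Γ) := ⟨fun _ _ => step_symm⟩; Relation.ReflTransGen.symmetric).symm _ _ ih
    | trans h1 h2 ih1 ih2 => exact Relation.ReflTransGen.trans ih1 ih2
    | congr h ih => exact rtg_congr ih
  · intro h
    induction h with
    | refl => exact Thm.refl _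
    | tail _ hst ih => exact Thm.trans ih (thm_of_step hst)

lemma subterm_trans_s9 {a b c : Tm S} (h1 : Subterm a b) (h2 : Subterm b c) : Subterm a c := by
  induction h2 with
  | refl => exact h1
  | step i _ ih => exact Subterm.step i ih

lemma sideOf_mem_ST {p : Tm S} (h : SideOf Γ p) : p ∈ ST Γ := by
  obtain ⟨e, he, h | h⟩ := h
  · exact ⟨e, he, Or.inl (h ▸ Subterm.refl _)⟩
  · exact ⟨e, he, Or.inr (h ▸ Subterm.refl _)⟩

lemma mem_ST_of_subterm {s p : Tm S} (hs : Subterm s p) (hp : p ∈ ST Γ) : s ∈ ST Γ := by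
  obtain ⟨e, he, h | h⟩ := hp
  · exact ⟨e, he, Or.inl (subterm_trans_s9 hs h)⟩
  · exact ⟨e, he, Or.inr (subterm_trans_s9 hs h)⟩

/-- Root analysis of a rewriting sequence. -/
lemma rtg_root {t s : Tm S} (h : Relation.ReflTransGen (Step Γ) t s) :
    ∀ (f : S.Op) (a : Fin (S.arity f) → Tm S), t = Tm.node f a →
      ∃ b : Fin (S.arity f) → Tm S, (∀ i, Thm Γ (a i) (b i)) ∧
        (s = Tm.node f b ∨ SideOf Γ (Tm.node f b)) := by
  induction h using Relation.ReflTransGen.head_induction_on with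
  | refl =>
      intro f a ht
      exact ⟨a, fun i => Thm.refl _, Or.inl ht⟩
  | head hst hrest ih =>
      intro f a ht
      subst ht
      cases hst with
      | here hmem =>
          refine ⟨a, fun i => Thm.refl _, Or.inr ?_⟩
          rcases hmem with h | h
          · exact ⟨_, h, Or.inl rfl⟩
          · exact ⟨_, h, Or.inr rfl⟩
      | sub i hsti hagree =>
          rename_i a2
          obtain ⟨b, hb, hcase⟩ := ih f a2 rfl
          refine ⟨b, fun j => ?_, hcase⟩
          by_cases hj : j = i
          · subst hj; exact Thm.trans (thm_of_step hsti) (hb j)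
          · rw [hagree j hj]; exact hb j

lemma edge_invariant {u u₂ w w₂ : Tm S} (hu : Thm Γ u u₂) (hw : Thm Γ w w₂)
    (h : EdgeHat Γ u w) : EdgeHat Γ u₂ w₂ := by
  obtain ⟨u', w', h1, h2, h3, h4, h5⟩ := h
  exact ⟨u', w', h1, h2, Thm.trans (Thm.symm hu) h3, Thm.trans (Thm.symm hw) h4, h5⟩

/-- Subterms of a fixed term form a finite set. -/
lemma finite_subterm (u : Tm S) : {t : Tm S | Subterm t u}.Finite := by
  induction u with
  | node f a ih =>
      have : {t : Tm S | Subterm t (Tm.node f a)} ⊆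
          insert (Tm.node f a) (⋃ i, {t : Tm S | Subterm t (a i)}) := by
        intro t ht
        cases ht with
        | refl => exact Set.mem_insert _ _
        | step i h => exact Set.mem_insert_of_mem _ (Set.mem_iUnion.2 ⟨i, h⟩)
      exact Set.Finite.subset ((Set.finite_iUnion ih).insert _) this

lemma ST_finite (hΓ : Γ.Finite) : (ST Γ).Finite := by
  have : ST Γ ⊆ ⋃ e ∈ Γ, ({t : Tm S | Subterm t e.1} ∪ {t : Tm S | Subterm t e.2}) := by
    rintro t ⟨e, he, h⟩
    exact Set.mem_biUnion he h
  exact Set.Finite.subset (hΓ.biUnion fun e _ => (finite_subterm e.1).union (finite_subterm e.2)) this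

/-- Terms of bounded height form a finite set (signature is finite). -/
lemma finite_height_lt [Fintype S.Op] (N : ℕ) : {t : Tm S | t.height < N}.Finite := by
  induction N with
  | zero => simp
  | succ N ih =>
      haveI : Finite {t : Tm S | t.height < N} := ih
      rw [← Set.finite_coe_iff]
      let g : {t : Tm S | t.height < N + 1} →
          Σ f : S.Op, Fin (S.arity f) → {t : Tm S | t.height < N} :=
        fun t => match t with
        | ⟨Tm.node f a, ht⟩ => ⟨f, fun i => ⟨a i, by
            have := child_height_lt f a i
            simp only [Set.mem_setOf_eq] at ht ⊢
            omega⟩⟩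
      apply Finite.of_injective g
      rintro ⟨⟨f1, a1⟩, h1⟩ ⟨⟨f2, a2⟩, h2⟩ he
      simp only [g, Sigma.mk.inj_iff] at he
      obtain ⟨rfl, he2⟩ := he
      have ha : a1 = a2 := by
        funext i
        exact congrArg Subtype.val (congrFun (eq_of_heq he2) i)
      subst ha; rfl

end Aux

section Rank

variable {S : Sig} {Γ : Set (Tm S × Tm S)}

/-- Classes reachable from `p` in the quotient graph. -/
def reachSet (Γ : Set (Tm S × Tm S)) (p : Tm S) : Set (Quotient (thmSetoid Γ)) :=
  {x | ∃ w, Relation.ReflTransGen (EdgeHat Γ) p w ∧ Quotient.mk (thmSetoid Γ) w = x}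

lemma reachSet_finite (hΓ : Γ.Finite) (p : Tm S) : (reachSet Γ p).Finite := by
  have hsub : reachSet Γ p ⊆
      insert (Quotient.mk (thmSetoid Γ) p) ((Quotient.mk (thmSetoid Γ)) '' ST Γ) := by
    rintro x ⟨w, hw, rfl⟩
    rcases hw.cases_tail with h | ⟨c, _, hcw⟩
    · subst h; exact Set.mem_insert _ _
    · obtain ⟨u', w', _, hw'ST, _, hthmw, _⟩ := hcw
      have he : Quotient.mk (thmSetoid Γ) w = Quotient.mk (thmSetoid Γ) w' :=
        Quotient.sound (s := thmSetoid Γ) hthmw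
      exact Set.mem_insert_of_mem _ ⟨w', hw'ST, he.symm⟩
  exact Set.Finite.subset (((ST_finite hΓ).image _).insert _) hsub

noncomputable def rank (Γ : Set (Tm S × Tm S)) (p : Tm S) : ℕ := (reachSet Γ p).ncard

lemma self_mem_reachSet (p : Tm S) : Quotient.mk (thmSetoid Γ) p ∈ reachSet Γ p :=
  ⟨p, Relation.ReflTransGen.refl, rfl⟩

lemma rank_pos (hΓ : Γ.Finite) (p : Tm S) : 0 < rank Γ p :=
  (Set.ncard_pos (reachSet_finite hΓ p)).2 ⟨_, self_mem_reachSet p⟩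

lemma notCyclic_of_edge {p w : Tm S} (hp : ¬ CyclicFrom Γ p) (h : EdgeHat Γ p w) :
    ¬ CyclicFrom Γ w := by
  rintro ⟨u, hru, htu⟩
  exact hp ⟨u, Relation.ReflTransGen.head h hru, htu⟩

lemma rank_lt_of_edge (hΓ : Γ.Finite) {p w : Tm S} (hp : ¬ CyclicFrom Γ p)
    (h : EdgeHat Γ p w) : rank Γ w < rank Γ p := by
  have hsub : reachSet Γ w ⊆ reachSet Γ p := by
    rintro x ⟨v, hv, rfl⟩
    exact ⟨v, Relation.ReflTransGen.head h hv, rfl⟩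
  have hnot : Quotient.mk (thmSetoid Γ) p ∉ reachSet Γ w := by
    rintro ⟨w₂, hw₂, heq⟩
    have hthm : Thm Γ w₂ p := Quotient.exact heq
    rcases hw₂.cases_tail with heq' | ⟨c, hwc, hcw₂⟩
    · subst heq'
      exact hp ⟨p, Relation.ReflTransGen.refl,
        Relation.TransGen.single (edge_invariant (Thm.refl p) hthm h)⟩
    · have hcp : EdgeHat Γ c p := edge_invariant (Thm.refl c) hthm hcw₂
      have : Relation.TransGen (EdgeHat Γ) w p := Relation.TransGen.tail' hwc hcp
      exact hp ⟨p, Relation.ReflTransGen.refl, Relation.TransGen.head h this⟩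
  exact Set.ncard_lt_ncard ⟨hsub, fun hall => hnot (hall (self_mem_reachSet p))⟩
    (reachSet_finite hΓ p)

/-- Key bound: terms equivalent to a non-cyclic type have bounded height. -/
lemma height_lt_rank (hΓ : Γ.Finite) :
    ∀ (t p : Tm S), p ∈ ST Γ → ¬ CyclicFrom Γ p → Thm Γ t p → t.height < rank Γ p := by
  intro t
  induction t with
  | node f a ih =>
      intro p hpST hpnc htp
      obtain ⟨b, hb, hcase⟩ := rtg_root (thm_iff_rtg.1 htp) f a rfl
      -- the node `r = Tm.node f b` is in ST and equivalent to p
      have hbthm : Thm Γ (Tm.node f a) (Tm.node f b) := Thm.congr hb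
      have hrST : Tm.node f b ∈ ST Γ := by
        rcases hcase with rfl | hside
        · exact hpST
        · exact sideOf_mem_ST hside
      have hpr : Thm Γ p (Tm.node f b) := Thm.trans (Thm.symm htp) hbthm
      have hedge : ∀ i, EdgeHat Γ p (b i) := by
        intro i
        exact ⟨Tm.node f b, b i, hrST,
          mem_ST_of_subterm (Subterm.step i (Subterm.refl _)) hrST,
          hpr, Thm.refl _, ⟨f, b, i, rfl, rfl⟩⟩
      rw [node_height]
      rw [Finset.sup_lt_iff (rank_pos hΓ p)]
      intro i _
      have hbnc : ¬ CyclicFrom Γ (b i) := notCyclic_of_edge hpnc (hedge i)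
      have hbST : b i ∈ ST Γ := mem_ST_of_subterm (Subterm.step i (Subterm.refl _)) hrST
      have h1 : (a i).height < rank Γ (b i) := ih i (b i) hbST hbnc (hb i)
      have h2 : rank Γ (b i) < rank Γ p := rank_lt_of_edge hΓ hpnc (hedge i)
      omega

end Rank

section Unbounded

variable {S : Sig} {Γ : Set (Tm S × Tm S)}

/-- The class of `t` contains terms of arbitrarily large height. -/
def Unb (Γ : Set (Tm S × Tm S)) (t : Tm S) : Prop :=
  ∀ n : ℕ, ∃ s, Thm Γ t s ∧ n ≤ s.height

lemma grow_of_edge {u w s : Tm S} (h : EdgeHat Γ u w) (hs : Thm Γ w s) :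
    ∃ s', Thm Γ u s' ∧ s.height < s'.height := by
  obtain ⟨u', w', _, _, huu', hww', f, a, i, rfl, hai⟩ := h
  refine ⟨Tm.node f (Function.update a i s), ?_, ?_⟩
  · refine Thm.trans huu' (Thm.congr fun j => ?_)
    by_cases hj : j = i
    · subst hj
      rw [Function.update_self, hai]
      exact Thm.trans (Thm.symm hww') hs
    · rw [Function.update_of_ne hj]; exact Thm.refl _
  · have := child_height_lt f (Function.update a i s) i
    rw [Function.update_self] at this
    omega

lemma grow_of_transGen {u v : Tm S} (h : Relation.TransGen (EdgeHat Γ) u v) :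
    ∀ s, Thm Γ v s → ∃ s', Thm Γ u s' ∧ s.height < s'.height := by
  induction h with
  | single h => exact fun s hs => grow_of_edge h hs
  | tail _ hedge ih =>
      intro s hs
      obtain ⟨s₁, hs₁, hh₁⟩ := grow_of_edge hedge hs
      obtain ⟨s', hs', hh'⟩ := ih s₁ hs₁
      exact ⟨s', hs', lt_trans hh₁ hh'⟩

lemma unb_of_cycle {u : Tm S} (h : Relation.TransGen (EdgeHat Γ) u u) : Unb Γ u := by
  intro n
  induction n with
  | zero => exact ⟨u, Thm.refl u, Nat.zero_le _⟩
  | succ n ih =>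
      obtain ⟨s, hs, hn⟩ := ih
      obtain ⟨s', hs', hh⟩ := grow_of_transGen h s hs
      exact ⟨s', hs', by omega⟩

lemma unb_of_thm {t p : Tm S} (h : Thm Γ t p) (hp : Unb Γ p) : Unb Γ t :=
  fun n => by obtain ⟨s, hs, hn⟩ := hp n; exact ⟨s, Thm.trans h hs, hn⟩

lemma unb_of_rtg {p u : Tm S} (h : Relation.ReflTransGen (EdgeHat Γ) p u) (hu : Unb Γ u) :
    Unb Γ p := by
  induction h using Relation.ReflTransGen.head_induction_on with
  | refl => exact hu
  | head hedge _ ih =>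
      intro n
      obtain ⟨s, hs, hn⟩ := ih n
      obtain ⟨s', hs', hh⟩ := grow_of_edge hedge hs
      exact ⟨s', hs', by omega⟩

lemma unb_of_subterm {s t : Tm S} (h : Subterm s t) (hs : Unb Γ s) : Unb Γ t := by
  induction h with
  | refl => exact hs
  | step i _ ih =>
      intro n
      obtain ⟨y, hy, hn⟩ := ih n
      rename_i f a _
      refine ⟨Tm.node f (Function.update a i y), Thm.congr fun j => ?_, ?_⟩
      · by_cases hj : j = i
        · subst hj; rw [Function.update_self]; exact hy
        · rw [Function.update_of_ne hj]; exact Thm.refl _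
      · have := child_height_lt f (Function.update a i y) i
        rw [Function.update_self] at this
        omega

lemma exists_const_subterm (t : Tm S) :
    ∃ (c : S.Op) (h : S.arity c = 0), Subterm (constTm S c h) t := by
  induction t with
  | node f a ih =>
      by_cases h0 : S.arity f = 0
      · refine ⟨f, h0, ?_⟩
        have : constTm S f h0 = Tm.node f a := by
          unfold constTm
          congr 1
          funext i
          exact absurd i.isLt (by omega)
        rw [this]
        exact Subterm.refl _
      · obtain ⟨c, hc, hsub⟩ := ih ⟨0, Nat.pos_of_ne_zero h0⟩
        exact ⟨c, hc, Subterm.step _ hsub⟩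

lemma infinite_of_unb {t : Tm S} (h : Unb Γ t) : {s | Thm Γ t s}.Infinite := by
  intro hfin
  set F := hfin.toFinset with hF
  obtain ⟨s, hs, hn⟩ := h (F.sup Tm.height + 1)
  have hsF : s ∈ F := hfin.mem_toFinset.2 hs
  have := Finset.le_sup (f := Tm.height) hsF
  omega

end Unbounded


/-- Every `∼_Γ`-congruence class of ground terms is infinite iff every
constant symbol of `Σ` is of cyclic type. -/
theorem stmt9 (S : Sig) [Fintype S.Op] (Γ : Set (Tm S × Tm S)) (hΓ : Γ.Finite) :
    (∀ t : Tm S, {s | Thm Γ t s}.Infinite) ↔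
    (∀ (c : S.Op) (h : S.arity c = 0), OfCyclicType Γ (constTm S c h)) := by
  constructor
  · intro hinf c h
    by_contra hnc
    have hnc' : ∀ p, SideOf Γ p → Thm Γ (constTm S c h) p → ¬ CyclicFrom Γ p := by
      intro p h1 h2 h3; exact hnc ⟨p, h1, h2, h3⟩
    by_cases hty : HasType Γ (constTm S c h)
    · obtain ⟨p, hside, hthm⟩ := hty
      have hpnc := hnc' p hside hthm
      have hpST := sideOf_mem_ST hside
      refine hinf (constTm S c h) (Set.Finite.subset (finite_height_lt (rank Γ p)) ?_)
      intro s hs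
      exact height_lt_rank hΓ s p hpST hpnc (Thm.trans (Thm.symm hs) hthm)
    · refine hinf (constTm S c h) (Set.Finite.subset (Set.finite_singleton (constTm S c h)) ?_)
      intro s hs
      obtain ⟨b, hb, hcase⟩ := rtg_root (thm_iff_rtg.1 hs) c _ rfl
      rcases hcase with rfl | hside
      · simp only [Set.mem_singleton_iff]
        unfold constTm
        congr 1
        funext i
        exact absurd i.isLt (by omega)
      · exact absurd ⟨Tm.node c b, hside, Thm.congr hb⟩ hty
  · intro hcyc t
    obtain ⟨c, h, hsub⟩ := exists_const_subterm t
    obtain ⟨p, hside, hthm, u, hru, htu⟩ := hcyc c h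
    exact infinite_of_unb (unb_of_subterm hsub (unb_of_thm hthm (unb_of_rtg hru (unb_of_cycle htu))))

end AFA
end

section
/- Let Γ be a finite set of ground term equations and let t be a ground term that has a subterm whose ∼_Γ-class contains a term mentioned in Γ whose type is cyclic. Then the ∼_Γ-congruence class of t is infinite. -/
namespace AFA

open Classical

lemma height_child_lt {S : Sig} (f : S.Op) (a : Fin (S.arity f) → Tm S)
    (i : Fin (S.arity f)) : (a i).height + 1 ≤ (Tm.node f a).height := by
  exact Finset.le_sup (f := fun j => (a j).height + 1) (Finset.mem_univ i)

/-- Crossing one edge of the quotient graph backwards increases available height. -/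
lemma edge_lift {S : Sig} {Γ : Set (Tm S × Tm S)} {x y : Tm S}
    (hxy : EdgeHat Γ x y) (w : Tm S) (hw : Thm Γ y w) :
    ∃ v, Thm Γ x v ∧ w.height + 1 ≤ v.height := by
  obtain ⟨u', w', _, _, hxu', hyw', f, a, i, hu', hai⟩ := hxy
  classical
  refine ⟨Tm.node f (Function.update a i w), ?_, ?_⟩
  · refine Thm.trans hxu' ?_
    rw [hu']
    refine Thm.congr fun j => ?_
    by_cases hj : j = i
    · subst hj
      rw [Function.update_self]
      exact Thm.trans (hai ▸ Thm.symm hyw') hw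
    · rw [Function.update_of_ne hj]
      exact Thm.refl _
  · have := height_child_lt f (Function.update a i w) i
    rwa [Function.update_self] at this

lemma path_lift {S : Sig} {Γ : Set (Tm S × Tm S)} {x y : Tm S}
    (hxy : Relation.ReflTransGen (EdgeHat Γ) x y) (n : ℕ)
    (hw : ∃ w, Thm Γ y w ∧ n ≤ w.height) :
    ∃ v, Thm Γ x v ∧ n ≤ v.height := by
  induction hxy using Relation.ReflTransGen.head_induction_on with
  | refl => exact hw
  | head hxc _ ih =>
    obtain ⟨v, hv, hvh⟩ := ih
    obtain ⟨v', hv', hvh'⟩ := edge_lift hxc v hv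
    exact ⟨v', hv', by omega⟩

lemma cycle_unbounded {S : Sig} {Γ : Set (Tm S × Tm S)} {u : Tm S}
    (hu : Relation.TransGen (EdgeHat Γ) u u) (n : ℕ) :
    ∃ w, Thm Γ u w ∧ n ≤ w.height := by
  induction n with
  | zero => exact ⟨u, Thm.refl u, Nat.zero_le _⟩
  | succ n ih =>
    have hcases := (Relation.transGen_iff (EdgeHat Γ) u u).mp hu
    obtain ⟨b, hub, hbu⟩ : ∃ b, Relation.ReflTransGen (EdgeHat Γ) u b ∧ EdgeHat Γ b u := by
      rcases hcases with h | ⟨c, hc, hcu⟩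
      · exact ⟨u, Relation.ReflTransGen.refl, h⟩
      · exact ⟨c, hc.to_reflTransGen, hcu⟩
    obtain ⟨w, hw, hwh⟩ := ih
    obtain ⟨v, hv, hvh⟩ := edge_lift hbu w hw
    obtain ⟨v', hv', hvh'⟩ := path_lift hub (n + 1) ⟨v, hv, by omega⟩
    exact ⟨v', hv', hvh'⟩

/-- Lifting unbounded height from a subterm to the whole term. -/
lemma subterm_lift {S : Sig} {Γ : Set (Tm S × Tm S)} {s t : Tm S}
    (hst : Subterm s t) (w : Tm S) (hw : Thm Γ s w) :
    ∃ v, Thm Γ t v ∧ w.height ≤ v.height := by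
  classical
  induction hst with
  | refl => exact ⟨w, hw, le_refl _⟩
  | @step f a i _ ih =>
    obtain ⟨v, hv, hvh⟩ := ih
    refine ⟨Tm.node f (Function.update a i v), ?_, ?_⟩
    · refine Thm.congr fun j => ?_
      by_cases hj : j = i
      · subst hj; rw [Function.update_self]; exact hv
      · rw [Function.update_of_ne hj]; exact Thm.refl _
    · have := height_child_lt f (Function.update a i v) i
      rw [Function.update_self] at this
      omega

/-- If a ground term `t` has a subterm of cyclic type, then the
`∼_Γ`-congruence class of `t` is infinite. -/
theorem stmt10 (S : Sig) [Fintype S.Op] (Γ : Set (Tm S × Tm S)) (hΓ : Γ.Finite)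
    (t : Tm S) (h : ∃ s, Subterm s t ∧ OfCyclicType Γ s) :
    {u | Thm Γ t u}.Infinite := by
  obtain ⟨s, hst, p, _, hsp, u, hpu, huu⟩ := h
  -- the class of t contains terms of arbitrarily large height
  have key : ∀ n, ∃ v, Thm Γ t v ∧ n ≤ v.height := by
    intro n
    obtain ⟨w, hw, hwh⟩ := cycle_unbounded huu n
    obtain ⟨w', hw', hwh'⟩ := path_lift hpu n ⟨w, hw, hwh⟩
    obtain ⟨v, hv, hvh⟩ := subterm_lift hst w' (Thm.trans hsp hw')
    exact ⟨v, hv, by omega⟩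
  intro hfin
  have himg : (Tm.height '' {u | Thm Γ t u}).Finite := hfin.image _
  obtain ⟨N, hN⟩ := himg.bddAbove
  obtain ⟨v, hv, hvh⟩ := key (N + 1)
  have : v.height ≤ N := hN ⟨v, hv, rfl⟩
  omega

end AFA
end

section
/- Let Γ be a finite set of ground term equations with ST(Γ) closed under the operations up to ∼_Γ-equivalence (every constant is equivalent to a member of ST(Γ), and f applied to members of ST(Γ) is always equivalent to a member of ST(Γ)). Then the map φ defined inductively by φ(c) = some u ∈ ST(Γ) with c ∼_Γ u, and φ(f t₀…t_{k-1}) = some u ∈ ST(Γ) with f φ(t₀)…φ(t_{k-1}) ∼_Γ u, induces a well-defined isomorphism between F_Γ and the quotient of ST(Γ) by ∼_Γ with operations defined via these equivalences. -/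
namespace AFA

open Classical

theorem phiST_spec {S : Sig} (Γ : Set (Tm S × Tm S))
    (hf : ∀ (f : S.Op) (a : Fin (S.arity f) → Tm S), (∀ i, a i ∈ ST Γ) →
      ∃ u ∈ ST Γ, Thm Γ (Tm.node f a) u) :
    ∀ t : Tm S, Thm Γ t (phiST Γ hf t).1 := by
  intro t
  induction t with
  | node f a ih =>
    rw [phiST]
    exact Thm.trans (Thm.congr ih)
      (hf f (fun i => (phiST Γ hf (a i)).1) (fun i => (phiST Γ hf (a i)).2)).choose_spec.2

/-- If `ST(Γ)` is closed under the operations up to `∼_Γ`-equivalence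
(every constant is equivalent to a member of `ST(Γ)`, and every application of an
operation to members of `ST(Γ)` is equivalent to a member of `ST(Γ)`), then the
inductively defined map `φ` induces a well-defined isomorphism between `F_Γ` and
the quotient algebra of `ST(Γ)` by `∼_Γ`. -/
theorem stmt12 (S : Sig) [Fintype S.Op] (Γ : Set (Tm S × Tm S)) (hΓ : Γ.Finite)
    (hc : ∀ (c : S.Op) (h : S.arity c = 0), ∃ u ∈ ST Γ, Thm Γ (constTm S c h) u)
    (hf : ∀ (f : S.Op) (a : Fin (S.arity f) → Tm S), (∀ i, a i ∈ ST Γ) →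
      ∃ u ∈ ST Γ, Thm Γ (Tm.node f a) u) :
    ∃ h : Hom (FGamma Γ) (STAlg Γ hf),
      Function.Bijective h.toFun ∧
      ∀ t : Tm S, h.toFun (Quotient.mk (thmSetoid Γ) t) =
        Quotient.mk (Setoid.comap (Subtype.val : ST Γ → Tm S) (thmSetoid Γ))
          (phiST Γ hf t) := by
  set sd := Setoid.comap (Subtype.val : ST Γ → Tm S) (thmSetoid Γ) with hsd
  have hspec := phiST_spec Γ hf
  have hmk : ∀ (u v : {u : Tm S // u ∈ ST Γ}), Thm Γ u.1 v.1 →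
      Quotient.mk sd u = Quotient.mk sd v := fun u v h => Quotient.sound h
  have hmk' : ∀ (u v : {u : Tm S // u ∈ ST Γ}),
      Quotient.mk sd u = Quotient.mk sd v → Thm Γ u.1 v.1 := fun u v h =>
    Quotient.exact h
  -- the lifted map
  let φ : Quotient (thmSetoid Γ) → Quotient sd :=
    Quotient.lift (fun t => Quotient.mk sd (phiST Γ hf t))
      (by
        intro t t' h
        exact hmk _ _ (Thm.trans (Thm.symm (hspec t)) (Thm.trans h (hspec t'))))
  have hφ : ∀ t : Tm S, φ (Quotient.mk (thmSetoid Γ) t) = Quotient.mk sd (phiST Γ hf t) :=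
    fun t => rfl
  -- key: φ sends the class of any term equivalent to u ∈ ST Γ to the class of u
  have hval : ∀ (t : Tm S) (u : {u : Tm S // u ∈ ST Γ}), Thm Γ t u.1 →
      φ (Quotient.mk (thmSetoid Γ) t) = Quotient.mk sd u := by
    intro t u h
    exact hmk _ _ (Thm.trans (Thm.symm (hspec t)) h)
  have hout : ∀ x : Quotient (thmSetoid Γ), Quotient.mk (thmSetoid Γ) x.out = x :=
    fun x => Quotient.out_eq x
  have houtthm : ∀ (t : Tm S), Thm Γ ((Quotient.mk (thmSetoid Γ) t).out) t := by
    intro t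
    exact Quotient.exact (hout (Quotient.mk (thmSetoid Γ) t))
  refine ⟨⟨φ, ?_⟩, ⟨?_, ?_⟩, fun t => rfl⟩
  · -- homomorphism
    intro f a
    show φ (Quotient.mk (thmSetoid Γ) (Tm.node f (fun i => (a i).out))) = _
    show _ = Quotient.mk sd ⟨(hf f (fun i => ((φ (a i)).out).1)
        (fun i => ((φ (a i)).out).2)).choose, _⟩
    apply hval
    refine Thm.trans (Thm.congr (b := fun i => ((φ (a i)).out).1) ?_)
      (hf f (fun i => ((φ (a i)).out).1) (fun i => ((φ (a i)).out).2)).choose_spec.2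
    intro i
    -- Thm Γ (a i).out ((φ (a i)).out).1
    have h1 : φ (a i) = Quotient.mk sd (phiST Γ hf (a i).out) := by
      conv_lhs => rw [← hout (a i)]
      exact hφ _
    have h2 : Quotient.mk sd ((φ (a i)).out) = φ (a i) := Quotient.out_eq _
    have h3 : Thm Γ ((φ (a i)).out).1 (phiST Γ hf (a i).out).1 :=
      hmk' _ _ (h2.trans h1)
    exact Thm.trans (hspec (a i).out) (Thm.symm h3)
  · -- injective
    intro x y h
    rw [← hout x, ← hout y] at h ⊢
    have := hmk' _ _ h
    exact Quotient.sound (Thm.trans (hspec x.out)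
      (Thm.trans this (Thm.symm (hspec y.out))))
  · -- surjective
    intro y
    refine ⟨Quotient.mk (thmSetoid Γ) (y.out).1, ?_⟩
    show φ (Quotient.mk (thmSetoid Γ) (y.out).1) = y
    rw [hval _ y.out (Thm.refl _)]
    exact Quotient.out_eq y

end AFA
end
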